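/- arXiv:1203.5465 — 11 statements merged into one kernel-verified Lean document; each statement's English description precedes it below -/
import Mathlib

section
/- Let a > 0, k₁ = π/(2a), χ₁(u) = cos(k₁u), and for an integer k ≥ 0 set η_k = ∫_{−a}^{a} u^k (χ₁′(u)² − k₁² χ₁(u)²) du. If k ≥ 2 is even, then η_k = (1/2) · (k! / (2k₁)^{k−1}) · Σ_{l=1}^{k/2} (−1)^{k/2−l} π^{2l−1}/(2l−1)!. -/
open Real MeasureTheory Finset

lemma antideriv_pow_cos (b : ℝ) (hb : b ≠ 0) (k : ℕ) (x : ℝ) :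
    HasDerivAt (fun u : ℝ => ∑ j ∈ range (k+1),
      (-1:ℝ)^j * (k.descFactorial j : ℝ) * u^(k-j) * Real.sin (b*u - j*(π/2)) / b^(j+1))
      (x^k * Real.cos (b*x)) x := by
  set A : ℕ → ℝ := fun j =>
    (-1:ℝ)^j * (k.descFactorial j : ℝ) * x^(k-j) * Real.cos (b*x - j*(π/2)) / b^j with hA
  have key : ∀ j ∈ range (k+1), HasDerivAt (fun u : ℝ =>
      (-1:ℝ)^j * (k.descFactorial j : ℝ) * u^(k-j) * Real.sin (b*u - j*(π/2)) / b^(j+1))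
      (A j - A (j+1)) x := by
    intro j _
    have h1 : HasDerivAt (fun u : ℝ => u^(k-j)) ((k-j : ℕ) * x^(k-j-1)) x :=
      hasDerivAt_pow (k-j) x
    have h2 : HasDerivAt (fun u : ℝ => Real.sin (b*u - j*(π/2)))
        (Real.cos (b*x - j*(π/2)) * b) x := by
      have : HasDerivAt (fun u : ℝ => b*u - j*(π/2)) b x := by
        simpa using ((hasDerivAt_id x).const_mul b).sub_const (j*(π/2))
      simpa using this.sin
    have h3 := ((h1.mul h2).const_mul ((-1:ℝ)^j * (k.descFactorial j : ℝ))).div_const (b^(j+1))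
    have heq : (fun u : ℝ => (-1:ℝ)^j * (k.descFactorial j : ℝ) * u^(k-j) * Real.sin (b*u - j*(π/2)) / b^(j+1))
        = fun u : ℝ => (-1:ℝ)^j * (k.descFactorial j : ℝ) * (u^(k-j) * Real.sin (b*u - j*(π/2))) / b^(j+1) := by
      funext u; ring
    rw [heq]
    convert h3 using 1
    · rfl
    · rfl
    · rfl
    have hcos : Real.cos (b*x - (j+1:ℕ)*(π/2)) = Real.sin (b*x - j*(π/2)) := by
      have : b*x - (j+1:ℕ)*(π/2) = (b*x - j*(π/2)) - π/2 := by push_cast; ring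
      rw [this, Real.cos_sub_pi_div_two]
    have hdf : (k.descFactorial (j+1) : ℝ) = (k - j : ℕ) * (k.descFactorial j : ℝ) := by
      rw [Nat.descFactorial_succ]; push_cast; ring
    have hsub : k - (j+1) = k - j - 1 := by omega
    simp only [hA]
    rw [hcos, hdf, hsub]
    field_simp
    ring
  have hsum := HasDerivAt.fun_sum key
  have : ∑ j ∈ range (k+1), (A j - A (j+1)) = A 0 - A (k+1) := Finset.sum_range_sub' A (k+1)
  rw [this] at hsum
  have hA0 : A 0 = x^k * Real.cos (b*x) := by simp [hA]
  have hAk : A (k+1) = 0 := by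
    have h0 : k.descFactorial (k+1) = 0 := Nat.descFactorial_eq_zero_iff_lt.2 (Nat.lt_succ_self k)
    simp [hA, h0]
  rw [hA0, hAk, sub_zero] at hsum
  exact hsum

lemma integral_pow_cos (b : ℝ) (hb : b ≠ 0) (k : ℕ) (a : ℝ) :
    ∫ u in (-a)..a, u^k * Real.cos (b*u)
      = ∑ j ∈ range (k+1), (-1:ℝ)^j * (k.descFactorial j : ℝ)
          * (a^(k-j) * Real.sin (b*a - j*(π/2)) - (-a)^(k-j) * Real.sin (b*(-a) - j*(π/2)))
          / b^(j+1) := by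
  rw [intervalIntegral.integral_eq_sub_of_hasDerivAt
    (fun x _ => antideriv_pow_cos b hb k x)
    (((continuous_pow k).mul ((Real.continuous_cos.comp (continuous_const.mul continuous_id)))).intervalIntegrable _ _)]
  rw [← Finset.sum_sub_distrib]
  apply Finset.sum_congr rfl
  intro j _
  ring

lemma sum_eval (a b : ℝ) (ha : 0 < a) (hb : 0 < b) (hba : b * a = π) (m : ℕ) (hm : 1 ≤ m) :
    ∑ j ∈ range (2*m+1), (-1:ℝ)^j * ((2*m).descFactorial j : ℝ)
        * (a^(2*m-j) * Real.sin (b*a - j*(π/2)) - (-a)^(2*m-j) * Real.sin (b*(-a) - j*(π/2)))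
        / b^(j+1)
    = ∑ l ∈ Icc 1 m, (-2) * (-1:ℝ)^(m-l) * ((2*m).factorial : ℝ) * π^(2*l-1)
        / (((2*l-1).factorial : ℝ) * b^(2*m+1)) := by
  set t : ℕ → ℝ := fun j => (-1:ℝ)^j * ((2*m).descFactorial j : ℝ)
        * (a^(2*m-j) * Real.sin (b*a - j*(π/2)) - (-a)^(2*m-j) * Real.sin (b*(-a) - j*(π/2)))
        / b^(j+1) with ht
  have hsub : (Icc 1 m).image (fun l => 2*m+1-2*l) ⊆ range (2*m+1) := by
    intro j hj
    simp only [mem_image, mem_Icc] at hj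
    obtain ⟨l, ⟨hl1, hl2⟩, rfl⟩ := hj
    simp only [mem_range]; omega
  have hzero : ∀ j ∈ range (2*m+1), j ∉ (Icc 1 m).image (fun l => 2*m+1-2*l) → t j = 0 := by
    intro j hj hjS
    rcases Nat.even_or_odd j with ⟨i, hi⟩ | hodd
    · subst hi
      have h1 : b*a - (i+i : ℕ)*(π/2) = ((1 - i : ℤ)) * π := by rw [hba]; push_cast; ring
      have h2 : b*(-a) - (i+i : ℕ)*(π/2) = ((-1 - i : ℤ)) * π := by
        have : b * (-a) = -(b*a) := by ring
        rw [this, hba]; push_cast; ring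
      simp only [ht, h1, h2, Real.sin_int_mul_pi, mul_zero, sub_zero, zero_div, sub_self,
        mul_zero, zero_div]
    · exfalso
      apply hjS
      simp only [mem_range] at hj
      obtain ⟨i, hi⟩ := hodd
      simp only [mem_image, mem_Icc]
      exact ⟨m - i, by omega, by omega⟩
  rw [← Finset.sum_subset hsub hzero, Finset.sum_image (by
    intro l1 hl1 l2 hl2 h
    simp only [mem_coe, mem_Icc] at hl1 hl2
    simp only at h
    omega)]
  apply Finset.sum_congr rfl
  intro l hl
  simp only [mem_Icc] at hl
  obtain ⟨hl1, hl2⟩ := hl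
  have hj : 2*m+1-2*l = 2*(m-l)+1 := by omega
  set n := m - l with hn
  have hkj : 2*m - (2*n+1) = 2*l-1 := by omega
  rw [ht, hj]
  beta_reduce
  rw [hkj]
  have hs1 : b*a - (2*n+1 : ℕ)*(π/2) = π/2 - n*π := by rw [hba]; push_cast; ring
  have hs2 : b*(-a) - (2*n+1 : ℕ)*(π/2) = (π/2 - n*π) - 2*π := by
    have : b * (-a) = -(b*a) := by ring
    rw [this, hba]; push_cast; ring
  have hcn : Real.cos (n*π) = (-1:ℝ)^n := by
    have := Real.cos_nat_mul_pi_sub 0 n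
    simpa using this
  rw [hs1, hs2, Real.sin_sub_two_pi, Real.sin_pi_div_two_sub, hcn]
  have hneg : ((-1:ℝ))^(2*n+1) = -1 := Odd.neg_one_pow ⟨n, by ring⟩
  have hnegpow : (-a)^(2*l-1) = -(a^(2*l-1)) := Odd.neg_pow ⟨l-1, by omega⟩ a
  have hfac : ((2*l-1).factorial : ℝ) * ((2*m).descFactorial (2*n+1) : ℝ) = ((2*m).factorial : ℝ) := by
    have h := Nat.factorial_mul_descFactorial (n := 2*m) (k := 2*n+1) (by omega)
    rw [hkj] at h
    exact_mod_cast h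
  have hapow : a^(2*l-1) = π^(2*l-1) / b^(2*l-1) := by
    have haeq : a = π / b := by field_simp [hb.ne'] at hba ⊢; linarith [hba]
    rw [haeq, div_pow]
  have hbpow : b^(2*l-1) * b^(2*n+1+1) = b^(2*m+1) := by
    rw [← pow_add]; congr 1; omega
  rw [hneg, hnegpow, hapow]
  have hb1 : b^(2*l-1) ≠ 0 := pow_ne_zero _ hb.ne'
  have hb2 : b^(2*n+1+1) ≠ 0 := pow_ne_zero _ hb.ne'
  have hf1 : ((2*l-1).factorial : ℝ) ≠ 0 := Nat.cast_ne_zero.2 (Nat.factorial_ne_zero _)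
  rw [eq_div_iff (by positivity), div_mul_eq_mul_div, div_eq_iff hb2]
  have : ((2*m).factorial : ℝ) = ((2*l-1).factorial : ℝ) * ((2*m).descFactorial (2*n+1) : ℝ) := hfac.symm
  rw [this, ← hbpow]
  field_simp
  ring

theorem eta_even_formula (a : ℝ) (ha : 0 < a) (k : ℕ)
    (hk : 2 ≤ k) (hke : Even k) :
    ∫ u in (-a)..a,
      u ^ k * ((deriv (fun u : ℝ => Real.cos (Real.pi / (2 * a) * u)) u) ^ 2
        - (Real.pi / (2 * a)) ^ 2 * (Real.cos (Real.pi / (2 * a) * u)) ^ 2)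
    = (1 / 2) * ((Nat.factorial k : ℝ) / (2 * (Real.pi / (2 * a))) ^ (k - 1))
        * ∑ l ∈ Finset.Icc 1 (k / 2),
            (-1 : ℝ) ^ (k / 2 - l) * Real.pi ^ (2 * l - 1)
              / (Nat.factorial (2 * l - 1) : ℝ) := by
  obtain ⟨m, rfl⟩ := hke
  set c : ℝ := π / (2 * a) with hc
  have hm : 1 ≤ m := by omega
  have hcpos : 0 < c := by positivity
  set b : ℝ := 2 * c with hbdef
  have hbpos : 0 < b := by positivity
  have hba : b * a = π := by
    rw [hbdef, hc]; field_simp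
  have hderiv : ∀ x : ℝ, deriv (fun u : ℝ => Real.cos (c * u)) x = -Real.sin (c*x) * c := by
    intro x
    simpa using (((hasDerivAt_id x).const_mul c).cos).deriv
  simp only [hderiv]
  have hcong : ∀ u : ℝ, u ^ (m+m) * ((-Real.sin (c*u) * c) ^ 2 - c ^ 2 * Real.cos (c*u) ^ 2)
      = -(c^2) * (u ^ (m+m) * Real.cos (b*u)) := by
    intro u
    have h2 : b * u = 2 * (c * u) := by rw [hbdef]; ring
    rw [h2, Real.cos_two_mul]
    linear_combination (u ^ (m+m) * c^2) * (Real.sin_sq_add_cos_sq (c*u))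
  rw [intervalIntegral.integral_congr (g := fun u => -(c^2) * (u ^ (m+m) * Real.cos (b*u)))
    (fun u _ => hcong u)]
  rw [intervalIntegral.integral_const_mul]
  have hmm : m + m = 2 * m := by ring
  rw [hmm, integral_pow_cos b hbpos.ne' (2*m) a, sum_eval a b ha hbpos hba m hm]
  rw [show (2*m)/2 = m from by omega]
  rw [Finset.mul_sum, Finset.mul_sum]
  apply Finset.sum_congr rfl
  intro l hl
  simp only [mem_Icc] at hl
  have hsplit : b^(2*m+1) = b^(2*m-1) * b^2 := by rw [← pow_add]; congr 1; omega
  rw [hsplit, hbdef]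
  have h1 : ((2*l-1).factorial : ℝ) ≠ 0 := Nat.cast_ne_zero.2 (Nat.factorial_ne_zero _)
  have h2 : (2*c)^(2*m-1) ≠ 0 := pow_ne_zero _ (by positivity)
  field_simp
end

section
/- Let a > 0, k₁ = π/(2a), χ₁(u) = cos(k₁u), and for an integer k ≥ 0 set η_k = ∫_{−a}^{a} u^k (χ₁′(u)² − k₁² χ₁(u)²) du. If k ≥ 2 is even, then η_k > 0. -/
open Real MeasureTheory

theorem eta_even_pos (a : ℝ) (ha : 0 < a) (k : ℕ)
    (hk : 2 ≤ k) (hke : Even k) :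
    0 < ∫ u in (-a)..a,
      u ^ k * ((deriv (fun u : ℝ => Real.cos (Real.pi / (2 * a) * u)) u) ^ 2
        - (Real.pi / (2 * a)) ^ 2 * (Real.cos (Real.pi / (2 * a) * u)) ^ 2) := by
  have ha' : a ≠ 0 := ha.ne'
  set c : ℝ := Real.pi / (2 * a) with hc
  set F : ℝ → ℝ := fun x => x ^ k * Real.cos (Real.pi / a * x) with hF
  have hFcont : Continuous F := by fun_prop
  -- pointwise identity for the integrand
  have hptwise : ∀ u : ℝ,
      u ^ k * ((deriv (fun u : ℝ => Real.cos (c * u)) u) ^ 2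
        - c ^ 2 * (Real.cos (c * u)) ^ 2) = -c ^ 2 * F u := by
    intro u
    have hd : deriv (fun u : ℝ => Real.cos (c * u)) u = -Real.sin (c * u) * c := by
      have h1 : HasDerivAt (fun u : ℝ => c * u) c u := by
        simpa using (hasDerivAt_id u).const_mul c
      exact ((Real.hasDerivAt_cos (c*u)).comp u h1).deriv
    rw [hd]
    have h2 : Real.pi / a * u = 2 * (c * u) := by
      rw [hc]; ring
    have h3 : Real.cos (Real.pi / a * u) =
        Real.cos (c * u) ^ 2 - Real.sin (c * u) ^ 2 := by
      rw [h2, Real.cos_two_mul']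
    simp only [hF, h3]
    ring
  have hint : (∫ u in (-a)..a,
      u ^ k * ((deriv (fun u : ℝ => Real.cos (c * u)) u) ^ 2
        - c ^ 2 * (Real.cos (c * u)) ^ 2)) = -c ^ 2 * ∫ u in (-a)..a, F u := by
    rw [← intervalIntegral.integral_const_mul]
    exact intervalIntegral.integral_congr fun u _ => hptwise u
  rw [hint]
  -- symmetry: ∫_{-a}^0 F = ∫_0^a F
  have hFeven : ∀ x, F (-x) = F x := by
    intro x
    simp [hF, hke.neg_pow, mul_comm, mul_neg, Real.cos_neg]
  have hsym : (∫ u in (-a)..(0:ℝ), F u) = ∫ u in (0:ℝ)..a, F u := by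
    have := intervalIntegral.integral_comp_neg (a := 0) (b := a) F
    rw [neg_zero] at this
    rw [← this]
    exact intervalIntegral.integral_congr fun u _ => (hFeven u)
  have hsplit1 : (∫ u in (-a)..a, F u) = 2 * ∫ u in (0:ℝ)..a, F u := by
    rw [← intervalIntegral.integral_add_adjacent_intervals
      (hFcont.intervalIntegrable (-a) 0) (hFcont.intervalIntegrable 0 a), hsym]
    ring
  -- reflection: ∫_{a/2}^a F = ∫_0^{a/2} F(a - x)
  have hrefl : (∫ u in (a/2)..a, F u) = ∫ x in (0:ℝ)..(a/2), F (a - x) := by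
    rw [intervalIntegral.integral_comp_sub_left F a]
    congr 1 <;> ring
  have hsplit2 : (∫ u in (0:ℝ)..a, F u)
      = ∫ x in (0:ℝ)..(a/2), (F x + F (a - x)) := by
    have h2 : IntervalIntegrable (fun x => F (a - x)) volume 0 (a/2) :=
      (hFcont.comp (continuous_const.sub continuous_id)).intervalIntegrable 0 (a/2)
    rw [intervalIntegral.integral_add (hFcont.intervalIntegrable 0 (a/2)) h2, ← hrefl,
      intervalIntegral.integral_add_adjacent_intervals
        (hFcont.intervalIntegrable 0 (a/2)) (hFcont.intervalIntegrable (a/2) a)]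
  -- combine: the target equals 2c² ∫₀^{a/2} ((a-x)^k - x^k) cos(πx/a)
  have hcomb : ∀ x, F x + F (a - x)
      = -((((a - x) ^ k - x ^ k)) * Real.cos (Real.pi / a * x)) := by
    intro x
    have h4 : Real.pi / a * (a - x) = Real.pi - Real.pi / a * x := by
      field_simp
    simp only [hF, h4, Real.cos_pi_sub]
    ring
  have hpos : 0 < ∫ x in (0:ℝ)..(a/2),
      (((a - x) ^ k - x ^ k) * Real.cos (Real.pi / a * x)) := by
    apply intervalIntegral.intervalIntegral_pos_of_pos_on
    · exact (by fun_prop : Continuous fun x : ℝ =>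
        ((a - x) ^ k - x ^ k) * Real.cos (Real.pi / a * x)).intervalIntegrable 0 (a/2)
    · intro x hx
      obtain ⟨hx0, hx2⟩ := hx
      have hxa : x < a - x := by linarith
      have hpow : x ^ k < (a - x) ^ k :=
        pow_lt_pow_left₀ hxa hx0.le (by omega)
      have hcos : 0 < Real.cos (Real.pi / a * x) := by
        apply Real.cos_pos_of_mem_Ioo
        constructor
        · have : 0 ≤ Real.pi / a * x :=
            mul_nonneg (div_nonneg Real.pi_pos.le ha.le) hx0.le
          linarith [Real.pi_pos]
        · rw [div_mul_eq_mul_div, div_lt_div_iff₀ ha two_pos] at *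
          nlinarith [Real.pi_pos]
      exact mul_pos (by linarith) hcos
    · linarith
  have hc2 : 0 < c ^ 2 := by
    have : 0 < c := div_pos Real.pi_pos (by linarith)
    positivity
  calc (0:ℝ) < (2 * c ^ 2) * ∫ x in (0:ℝ)..(a/2),
        (((a - x) ^ k - x ^ k) * Real.cos (Real.pi / a * x)) :=
        mul_pos (by linarith) hpos
    _ = -c ^ 2 * ∫ u in (-a)..a, F u := by
        rw [hsplit1, hsplit2]
        rw [show (∫ x in (0:ℝ)..(a/2), (F x + F (a - x)))
          = ∫ x in (0:ℝ)..(a/2),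
            -((((a - x) ^ k - x ^ k)) * Real.cos (Real.pi / a * x)) from
          intervalIntegral.integral_congr fun x _ => hcomb x,
          intervalIntegral.integral_neg]
        ring
end

section
/- There exist constants C > 0 and s₀ ≥ 1 such that for all s ≥ s₀ one has s² − C·s ≤ r(s)² ≤ s² + C·s. -/
open Real MeasureTheory

/-- Radial principal curvature `k_s = r′z″ − r″z′` of the rotational hypersurface
with profile curve `(r, z)`. -/
noncomputable def radialCurv (r z : ℝ → ℝ) (s : ℝ) : ℝ :=
  deriv r s * deriv (deriv z) s - deriv (deriv r) s * deriv z s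

/-- Angular principal curvature `k_θ = z′/r` of the rotational hypersurface
with profile curve `(r, z)`. -/
noncomputable def angularCurv (r z : ℝ → ℝ) (s : ℝ) : ℝ :=
  deriv z s / r s

theorem r_sq_two_sided_bound
    (r z : ℝ → ℝ)
    (hr : ContDiff ℝ 2 r) (hz : ContDiff ℝ 2 z)
    (hr0 : r 0 = 0) (hr0' : deriv r 0 = 1)
    (hrpos : ∀ s > 0, 0 < r s)
    (harc : ∀ s ≥ 0, (deriv r s) ^ 2 + (deriv z s) ^ 2 = 1)
    (hjac : ∀ s > 0,
      deriv (deriv r) s + radialCurv r z s * angularCurv r z s * r s = 0)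
    (hint1 : IntegrableOn (fun s => (angularCurv r z s) ^ 2 * (r s) ^ 2) (Set.Ici 0))
    (hint2 : IntegrableOn (fun s => |radialCurv r z s * angularCurv r z s| * (r s) ^ 2) (Set.Ici 0))
    : ∃ C > (0 : ℝ), ∃ s₀ ≥ (1 : ℝ), ∀ s ≥ s₀,
      s ^ 2 - C * s ≤ (r s) ^ 2 ∧ (r s) ^ 2 ≤ s ^ 2 + C * s := by
  classical
  -- regularity
  have hrd : Differentiable ℝ r := hr.differentiable two_ne_zero
  have hrc : Continuous r := hrd.continuous
  have hr2 : ContDiff ℝ (1 + 1) r := by norm_num; exact hr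
  have hr1 : ContDiff ℝ 1 (deriv r) := (contDiff_succ_iff_deriv.mp hr2).2.2
  have hrd' : Differentiable ℝ (deriv r) := hr1.differentiable one_ne_zero
  have hrc' : Continuous (deriv r) := hrd'.continuous
  have hrc'' : Continuous (deriv (deriv r)) := hr1.continuous_deriv le_rfl
  have hzc' : Continuous (deriv z) := hz.continuous_deriv one_le_two
  have hz2 : ContDiff ℝ (1 + 1) z := by norm_num; exact hz
  have hz1 : ContDiff ℝ 1 (deriv z) := (contDiff_succ_iff_deriv.mp hz2).2.2
  have hzc'' : Continuous (deriv (deriv z)) := hz1.continuous_deriv le_rfl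
  set g : ℝ → ℝ :=
    fun t => (angularCurv r z t ^ 2 + radialCurv r z t * angularCurv r z t) * r t ^ 2 with hgdef
  have hmeas_ang : Measurable fun t => angularCurv r z t :=
    hzc'.measurable.div hrc.measurable
  have hcont_rad : Continuous fun t => radialCurv r z t :=
    (hrc'.mul hzc'').sub (hrc''.mul hzc')
  -- integrability of g
  have h2int : IntegrableOn (fun t => radialCurv r z t * angularCurv r z t * r t ^ 2)
      (Set.Ici 0) := by
    refine hint2.mono' ?_ ?_
    · exact ((hcont_rad.measurable.mul hmeas_ang).mul
        (hrc.measurable.pow_const 2)).aestronglyMeasurable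
    · filter_upwards with t
      rw [Real.norm_eq_abs, abs_mul, abs_of_nonneg (sq_nonneg (r t))]
  have hg_int : IntegrableOn g (Set.Ici 0) := by
    refine IntegrableOn.congr_fun (hint1.add h2int) (fun t _ => by simp [hgdef]; ring)
      measurableSet_Ici
  have hgabs_int : IntegrableOn (fun t => |g t|) (Set.Ici 0) := hg_int.abs
  set M : ℝ := ∫ t in Set.Ici (0 : ℝ), |g t| with hMdef
  have hM0 : 0 ≤ M := integral_nonneg fun t => abs_nonneg _
  have hg_ii : ∀ s : ℝ, 0 ≤ s → IntervalIntegrable g volume 0 s := fun s hs =>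
    (intervalIntegrable_iff_integrableOn_Ioc_of_le hs).mpr
      (hg_int.mono_set (Set.Ioc_subset_Icc_self.trans Set.Icc_subset_Ici_self))
  have hbound : ∀ s : ℝ, 0 ≤ s → |∫ t in (0 : ℝ)..s, g t| ≤ M := by
    intro s hs
    have h1 : |∫ t in (0 : ℝ)..s, g t| ≤ ∫ t in (0 : ℝ)..s, |g t| :=
      intervalIntegral.abs_integral_le_integral_abs hs
    have h2 : ∫ t in (0 : ℝ)..s, |g t| = ∫ t in Set.Ioc 0 s, |g t| :=
      intervalIntegral.integral_of_le hs
    have h3 : ∫ t in Set.Ioc 0 s, |g t| ≤ M := by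
      refine setIntegral_mono_set hgabs_int ?_ ?_
      · filter_upwards with t using abs_nonneg _
      · exact (Set.Ioc_subset_Icc_self.trans Set.Icc_subset_Ici_self).eventuallyLE
    linarith
  -- key identity : r s * r' s = s - ∫₀ˢ g
  have key : ∀ s : ℝ, 0 ≤ s → r s * deriv r s = s - ∫ t in (0 : ℝ)..s, g t := by
    intro s hs
    have hderiv : ∀ t ∈ Set.uIcc (0 : ℝ) s, HasDerivAt (fun u => r u * deriv r u)
        (deriv r t * deriv r t + r t * deriv (deriv r) t) t := fun t _ =>
      (hrd t).hasDerivAt.mul (hrd' t).hasDerivAt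
    have hcont : Continuous fun t => deriv r t * deriv r t + r t * deriv (deriv r) t :=
      (hrc'.mul hrc').add (hrc.mul hrc'')
    have hFTC := intervalIntegral.integral_eq_sub_of_hasDerivAt hderiv
      (hcont.intervalIntegrable 0 s)
    have heq : Set.EqOn (fun t => deriv r t * deriv r t + r t * deriv (deriv r) t)
        (fun t => 1 - g t) (Set.uIcc 0 s) := by
      intro t ht
      rw [Set.uIcc_of_le hs] at ht
      rcases eq_or_lt_of_le ht.1 with h0 | h0
      · simp [hgdef, ← h0, hr0, hr0']
      · have hrt : 0 < r t := hrpos t h0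
        have hz' : deriv z t = angularCurv r z t * r t := by
          rw [angularCurv]; field_simp
        have hr'' : deriv (deriv r) t = -(radialCurv r z t * angularCurv r z t * r t) := by
          have := hjac t h0; linarith
        have harct := harc t ht.1
        simp only [hgdef]
        rw [hr'', hz'] at *
        linear_combination harct
    rw [intervalIntegral.integral_congr heq,
      intervalIntegral.integral_sub intervalIntegrable_const (hg_ii s hs)] at hFTC
    simp [hr0, hr0'] at hFTC
    linarith
  have key2 : ∀ s : ℝ, 0 ≤ s → s - M ≤ r s * deriv r s := by
    intro s hs
    have h1 := hbound s hs
    have h2 := key s hs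
    have := abs_le.mp h1
    linarith [this.2]
  -- r s ≤ s for s ≥ 0
  have hrle : ∀ t : ℝ, 0 ≤ t → r t ≤ t := by
    intro t ht
    have hFTC := intervalIntegral.integral_eq_sub_of_hasDerivAt
      (f := r) (f' := deriv r) (fun u _ => (hrd u).hasDerivAt)
      (hrc'.intervalIntegrable 0 t)
    have hle : ∫ u in (0 : ℝ)..t, deriv r u ≤ ∫ u in (0 : ℝ)..t, (1 : ℝ) := by
      refine intervalIntegral.integral_mono_on ht (hrc'.intervalIntegrable 0 t)
        intervalIntegrable_const ?_
      intro u hu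
      have := harc u hu.1
      nlinarith [sq_nonneg (deriv z u), sq_nonneg (deriv r u - 1)]
    rw [hr0] at hFTC
    simp at hle
    linarith
  refine ⟨2 * M + 1, by linarith, 1, le_rfl, ?_⟩
  intro s hs1
  have hs0 : (0 : ℝ) ≤ s := by linarith
  constructor
  · -- lower bound
    have hderiv2 : ∀ t ∈ Set.uIcc (1 : ℝ) s, HasDerivAt (fun u => r u ^ 2)
        (2 * r t * deriv r t) t := by
      intro t _
      have h := (hrd t).hasDerivAt.pow 2
      norm_num at h
      exact h
    have hcont2 : Continuous fun t => 2 * r t * deriv r t :=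
      (continuous_const.mul hrc).mul hrc'
    have hFTC2 := intervalIntegral.integral_eq_sub_of_hasDerivAt hderiv2
      (hcont2.intervalIntegrable 1 s)
    have hderiv3 : ∀ t ∈ Set.uIcc (1 : ℝ) s, HasDerivAt (fun u => u ^ 2 - 2 * M * u)
        (2 * t - 2 * M) t := by
      intro t _
      have h1 : HasDerivAt (fun u : ℝ => u ^ 2) (2 * t) t := by
        simpa using (hasDerivAt_pow 2 t)
      have h2 : HasDerivAt (fun u : ℝ => 2 * M * u) (2 * M) t := by
        simpa using (hasDerivAt_id t).const_mul (2 * M)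
      exact h1.sub h2
    have hcont3 : Continuous fun t : ℝ => 2 * t - 2 * M :=
      (continuous_const.mul continuous_id).sub continuous_const
    have hFTC3 := intervalIntegral.integral_eq_sub_of_hasDerivAt hderiv3
      (hcont3.intervalIntegrable 1 s)
    have hmono : ∫ t in (1 : ℝ)..s, (2 * t - 2 * M) ≤ ∫ t in (1 : ℝ)..s, 2 * r t * deriv r t := by
      refine intervalIntegral.integral_mono_on hs1 (hcont3.intervalIntegrable 1 s)
        (hcont2.intervalIntegrable 1 s) ?_
      intro t ht
      have ht0 : (0 : ℝ) ≤ t := le_trans zero_le_one ht.1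
      have := key2 t ht0
      linarith
    rw [hFTC2, hFTC3] at hmono
    nlinarith [hM0, sq_nonneg (r 1)]
  · -- upper bound
    have h1 := hrle s hs0
    have h2 : 0 < r s := hrpos s (by linarith)
    nlinarith
end

section
/- The limit lim_{s→∞} r(s)/s = 1 holds. -/
open Real MeasureTheory

theorem r_over_s_tendsto_one
    (r z : ℝ → ℝ)
    (hr : ContDiff ℝ 2 r) (hz : ContDiff ℝ 2 z)
    (hr0 : r 0 = 0) (hr0' : deriv r 0 = 1)
    (hrpos : ∀ s > 0, 0 < r s)
    (harc : ∀ s ≥ 0, (deriv r s) ^ 2 + (deriv z s) ^ 2 = 1)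
    (hjac : ∀ s > 0,
      deriv (deriv r) s + radialCurv r z s * angularCurv r z s * r s = 0)
    (hint1 : IntegrableOn (fun s => (angularCurv r z s) ^ 2 * (r s) ^ 2) (Set.Ici 0))
    (hint2 : IntegrableOn (fun s => |radialCurv r z s * angularCurv r z s| * (r s) ^ 2) (Set.Ici 0))
    : Filter.Tendsto (fun s => r s / s) Filter.atTop (nhds 1) := by
  -- regularity facts
  have hr1 : ContDiff ℝ (1+1) r := by exact_mod_cast hr
  have hrd1 : Differentiable ℝ r := hr1.differentiable (by norm_num)
  have hrd2' : ContDiff ℝ (0+1) (deriv r) := by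
    exact_mod_cast (contDiff_succ_iff_deriv.mp hr1).2.2
  have hrd2 : Differentiable ℝ (deriv r) := hrd2'.differentiable (by norm_num)
  have hrc1 : Continuous (deriv r) := hrd2.continuous
  have hrc2 : Continuous (deriv (deriv r)) :=
    ((contDiff_succ_iff_deriv.mp hrd2').2.2).continuous
  have hrc0 : Continuous r := hrd1.continuous
  have hz1 : ContDiff ℝ (1+1) z := by exact_mod_cast hz
  have hzd2' : ContDiff ℝ (0+1) (deriv z) := by
    exact_mod_cast (contDiff_succ_iff_deriv.mp hz1).2.2
  have hzc1 : Continuous (deriv z) := (hzd2'.differentiable (by norm_num)).continuous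
  -- bounds on deriv r
  have hr'le : ∀ t ≥ (0:ℝ), deriv r t ≤ 1 := by
    intro t ht
    nlinarith [harc t ht, sq_nonneg (deriv z t), sq_nonneg (deriv r t - 1)]
  have hr'ge : ∀ t ≥ (0:ℝ), -1 ≤ deriv r t := by
    intro t ht
    nlinarith [harc t ht, sq_nonneg (deriv z t), sq_nonneg (deriv r t + 1)]
  -- rewrite the two integrands on Ioi 0
  set g2 : ℝ → ℝ := fun t => r t * deriv (deriv r) t with hg2
  have heq1 : Set.EqOn (fun s => (angularCurv r z s) ^ 2 * (r s) ^ 2)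
      (fun t => (deriv z t) ^ 2) (Set.Ioi 0) := by
    intro t ht
    have hrt : r t ≠ 0 := (hrpos t ht).ne'
    simp only [angularCurv, div_pow]
    exact div_mul_cancel₀ _ (pow_ne_zero 2 hrt)
  have heq2 : Set.EqOn (fun s => |radialCurv r z s * angularCurv r z s| * (r s) ^ 2)
      (fun t => |g2 t|) (Set.Ioi 0) := by
    intro t ht
    have h := hjac t ht
    have hrr : deriv (deriv r) t = -(radialCurv r z t * angularCurv r z t * r t) := by
      linarith
    have h2 : g2 t = -(radialCurv r z t * angularCurv r z t * (r t) ^ 2) := by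
      simp only [hg2]; rw [hrr]; ring
    simp only [h2, abs_neg, abs_mul, abs_of_nonneg (sq_nonneg (r t))]
  have hi1 : IntegrableOn (fun t => (deriv z t) ^ 2) (Set.Ioi 0) :=
    (hint1.mono_set Set.Ioi_subset_Ici_self).congr_fun heq1 measurableSet_Ioi
  have hi2 : IntegrableOn (fun t => |g2 t|) (Set.Ioi 0) :=
    (hint2.mono_set Set.Ioi_subset_Ici_self).congr_fun heq2 measurableSet_Ioi
  set C : ℝ := ∫ t in Set.Ioi (0:ℝ), (deriv z t) ^ 2 with hCdef
  set M : ℝ := ∫ t in Set.Ioi (0:ℝ), |g2 t| with hMdef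
  have hCnn : 0 ≤ C := setIntegral_nonneg measurableSet_Ioi (fun t _ => sq_nonneg _)
  have hMnn : 0 ≤ M := setIntegral_nonneg measurableSet_Ioi (fun t _ => abs_nonneg _)
  -- interval integral bounds
  have hzint : ∀ a b : ℝ, 0 ≤ a → a ≤ b → (∫ t in a..b, (deriv z t) ^ 2) ≤ C := by
    intro a b ha hab
    rw [intervalIntegral.integral_of_le hab]
    refine setIntegral_mono_set hi1 (Filter.Eventually.of_forall fun t => sq_nonneg _) ?_
    refine HasSubset.Subset.eventuallyLE ?_
    intro t ht
    exact lt_of_le_of_lt ha ht.1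
  have hgabs : ∀ b : ℝ, 0 ≤ b → (∫ t in (0:ℝ)..b, |g2 t|) ≤ M := by
    intro b hb
    rw [intervalIntegral.integral_of_le hb]
    refine setIntegral_mono_set hi2 (Filter.Eventually.of_forall fun t => abs_nonneg _) ?_
    refine HasSubset.Subset.eventuallyLE ?_
    intro t ht
    exact ht.1
  -- FTC for r
  have hrint : ∀ s : ℝ, (∫ t in (0:ℝ)..s, deriv r t) = r s - r 0 := fun s =>
    intervalIntegral.integral_deriv_eq_sub (fun x _ => hrd1 x) (hrc1.intervalIntegrable 0 s)
  -- the key identity for F = r * r'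
  have hF : ∀ s : ℝ, (∫ t in (0:ℝ)..s, ((deriv r t) ^ 2 + g2 t)) = r s * deriv r s := by
    intro s
    have h1 : ∀ x ∈ Set.uIcc (0:ℝ) s,
        HasDerivAt (fun t => r t * deriv r t) ((deriv r x) ^ 2 + g2 x) x := by
      intro x _
      have hmul : HasDerivAt (fun t => r t * deriv r t)
          (deriv r x * deriv r x + r x * deriv (deriv r) x) x :=
        ((hrd1 x).hasDerivAt.mul (hrd2 x).hasDerivAt)
      convert hmul using 1
      simp only [hg2]; ring
    have h2 : IntervalIntegrable (fun t => (deriv r t) ^ 2 + g2 t) volume 0 s :=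
      ((hrc1.pow 2).add (hrc0.mul hrc2)).intervalIntegrable 0 s
    rw [intervalIntegral.integral_eq_sub_of_hasDerivAt h1 h2]
    simp [hr0]
  -- key lower bound  r s * r' s ≥ s - C - M for s ≥ 0
  have hkey : ∀ s : ℝ, 0 ≤ s → s - C - M ≤ r s * deriv r s := by
    intro s hs
    rw [← hF s]
    rw [intervalIntegral.integral_add (f := fun t => deriv r t ^ 2) (g := g2) ((hrc1.pow 2).intervalIntegrable 0 s)
      ((hrc0.mul hrc2).intervalIntegrable 0 s)]
    have h1 : (∫ t in (0:ℝ)..s, (deriv r t) ^ 2)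
        = s - ∫ t in (0:ℝ)..s, (deriv z t) ^ 2 := by
      have hcg : (∫ t in (0:ℝ)..s, (deriv r t) ^ 2)
          = ∫ t in (0:ℝ)..s, (1 - (deriv z t) ^ 2) := by
        apply intervalIntegral.integral_congr
        rw [Set.uIcc_of_le hs]
        intro x hx
        have := harc x hx.1
        dsimp only
        linarith
      rw [hcg, intervalIntegral.integral_sub (g := fun t => deriv z t ^ 2) intervalIntegrable_const
        ((hzc1.pow 2).intervalIntegrable 0 s)]
      simp
    have h2 : (∫ t in (0:ℝ)..s, (deriv z t) ^ 2) ≤ C := hzint 0 s le_rfl hs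
    have h3 : -M ≤ ∫ t in (0:ℝ)..s, g2 t := by
      have habs : |∫ t in (0:ℝ)..s, g2 t| ≤ ∫ t in (0:ℝ)..s, |g2 t| :=
        intervalIntegral.abs_integral_le_integral_abs hs
      have h4 : (∫ t in (0:ℝ)..s, |g2 t|) ≤ M := hgabs s hs
      have h5 := neg_abs_le (∫ t in (0:ℝ)..s, g2 t)
      linarith
    rw [h1]
    linarith
  -- positivity of r' beyond C + M
  have hS0 : ∀ t : ℝ, C + M < t → 0 < deriv r t := by
    intro t ht
    have ht0 : 0 < t := lt_of_le_of_lt (by linarith) ht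
    have h := hkey t ht0.le
    have hrt := hrpos t ht0
    by_contra h'
    push_neg at h'
    have := mul_nonpos_of_nonneg_of_nonpos hrt.le h'
    linarith
  set S : ℝ := C + M + 1 with hSdef
  have hSpos : 0 < S := by positivity
  -- r s ≤ s for s ≥ 0
  have hrle : ∀ s : ℝ, 0 ≤ s → r s ≤ s := by
    intro s hs
    have h1 : (∫ t in (0:ℝ)..s, deriv r t) ≤ ∫ t in (0:ℝ)..s, (1:ℝ) := by
      apply intervalIntegral.integral_mono_on hs (hrc1.intervalIntegrable 0 s)
        intervalIntegrable_const
      intro x hx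
      exact hr'le x hx.1
    rw [hrint s, hr0] at h1
    simpa using h1
  -- main bound : s - r s ≤ 2S + C for s ≥ S
  have hbound : ∀ s : ℝ, S ≤ s → s - r s ≤ 2 * S + C := by
    intro s hsS
    have hs0 : (0:ℝ) ≤ s := le_trans hSpos.le hsS
    have hIa : IntervalIntegrable (fun t => 1 - deriv r t) volume 0 S :=
      (continuous_const.sub hrc1).intervalIntegrable 0 S
    have hIb : IntervalIntegrable (fun t => 1 - deriv r t) volume S s :=
      (continuous_const.sub hrc1).intervalIntegrable S s
    have hsplit : (∫ t in (0:ℝ)..s, (1 - deriv r t))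
        = (∫ t in (0:ℝ)..S, (1 - deriv r t)) + ∫ t in S..s, (1 - deriv r t) :=
      (intervalIntegral.integral_add_adjacent_intervals hIa hIb).symm
    have hval : (∫ t in (0:ℝ)..s, (1 - deriv r t)) = s - r s := by
      rw [intervalIntegral.integral_sub intervalIntegrable_const
        (hrc1.intervalIntegrable 0 s), hrint s, hr0]
      simp
    have hb1 : (∫ t in (0:ℝ)..S, (1 - deriv r t)) ≤ 2 * S := by
      have : (∫ t in (0:ℝ)..S, (1 - deriv r t)) ≤ ∫ t in (0:ℝ)..S, (2:ℝ) := by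
        apply intervalIntegral.integral_mono_on hSpos.le hIa intervalIntegrable_const
        intro x hx
        have := hr'ge x hx.1
        linarith
      simpa [mul_comm] using this
    have hb2 : (∫ t in S..s, (1 - deriv r t)) ≤ ∫ t in S..s, (deriv z t) ^ 2 := by
      apply intervalIntegral.integral_mono_on hsS hIb
        ((hzc1.pow 2).intervalIntegrable S s)
      intro x hx
      have hx0 : 0 ≤ x := le_trans hSpos.le hx.1
      have h1 : 0 < deriv r x := hS0 x (by simp only [hSdef] at hx; linarith [hx.1])
      have h2 := hr'le x hx0
      have h3 := harc x hx0
      show 1 - deriv r x ≤ deriv z x ^ 2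
      nlinarith
    have hb3 : (∫ t in S..s, (deriv z t) ^ 2) ≤ C := hzint S s hSpos.le hsS
    linarith [hsplit ▸ hval]
  -- squeeze
  have hub : ∀ᶠ s in Filter.atTop, r s / s ≤ 1 := by
    filter_upwards [Filter.eventually_ge_atTop (max S 1)] with s hs
    have hs1 : (1:ℝ) ≤ s := le_trans (le_max_right _ _) hs
    have := hrle s (by linarith)
    rw [div_le_one (by linarith)]
    exact this
  have hlb : ∀ᶠ s in Filter.atTop, 1 - (2 * S + C) / s ≤ r s / s := by
    filter_upwards [Filter.eventually_ge_atTop (max S 1)] with s hs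
    have hsS : S ≤ s := le_trans (le_max_left _ _) hs
    have hs1 : (1:ℝ) ≤ s := le_trans (le_max_right _ _) hs
    have hspos : (0:ℝ) < s := by linarith
    have hb := hbound s hsS
    have h2 : (s - (2 * S + C)) / s ≤ r s / s := by
      gcongr
      linarith
    calc 1 - (2 * S + C) / s = (s - (2 * S + C)) / s := by field_simp
      _ ≤ r s / s := h2
  have hdiv : Filter.Tendsto (fun s : ℝ => (2 * S + C) / s) Filter.atTop (nhds 0) :=
    Filter.Tendsto.div_atTop tendsto_const_nhds Filter.tendsto_id
  have hlim : Filter.Tendsto (fun s : ℝ => 1 - (2 * S + C) / s) Filter.atTop (nhds 1) := by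
    have := Filter.Tendsto.sub (tendsto_const_nhds (x := (1:ℝ))) hdiv
    simpa using this
  exact tendsto_of_tendsto_of_tendsto_of_le_of_le' hlim tendsto_const_nhds hlb hub
end

section
/- The limit lim_{s→∞} r′(s) = 1 holds. -/
open Real MeasureTheory

theorem deriv_r_tendsto_one
    (r z : ℝ → ℝ)
    (hr : ContDiff ℝ 2 r) (hz : ContDiff ℝ 2 z)
    (hr0 : r 0 = 0) (hr0' : deriv r 0 = 1)
    (hrpos : ∀ s > 0, 0 < r s)
    (harc : ∀ s ≥ 0, (deriv r s) ^ 2 + (deriv z s) ^ 2 = 1)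
    (hjac : ∀ s > 0,
      deriv (deriv r) s + radialCurv r z s * angularCurv r z s * r s = 0)
    (hint1 : IntegrableOn (fun s => (angularCurv r z s) ^ 2 * (r s) ^ 2) (Set.Ici 0))
    (hint2 : IntegrableOn (fun s => |radialCurv r z s * angularCurv r z s| * (r s) ^ 2) (Set.Ici 0))
    : Filter.Tendsto (deriv r) Filter.atTop (nhds 1) := by
  obtain ⟨hrdiff, -, hr1⟩ := (contDiff_succ_iff_deriv (n := 1)).mp (by exact_mod_cast hr)
  obtain ⟨hzdiff, -, hz1⟩ := (contDiff_succ_iff_deriv (n := 1)).mp (by exact_mod_cast hz)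
  have hrd : Differentiable ℝ (deriv r) := hr1.differentiable one_ne_zero
  have hzd : Differentiable ℝ (deriv z) := hz1.differentiable one_ne_zero
  have hrc : Continuous r := hr.continuous
  have hrdc : Continuous (deriv r) := hr1.continuous
  have hzdc : Continuous (deriv z) := hz1.continuous
  have hrddc : Continuous (deriv (deriv r)) := hr1.continuous_deriv le_rfl
  have hzddc : Continuous (deriv (deriv z)) := hz1.continuous_deriv le_rfl
  have hjac' : ∀ s : ℝ, 0 < s →
      deriv (deriv r) s = -(radialCurv r z s * angularCurv r z s * r s) := by
    intro s hs; have := hjac s hs; linarith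
  -- integrability of z'^2 on Ioi 0
  have hu_int : IntegrableOn (fun s => deriv z s ^ 2) (Set.Ioi (0:ℝ)) := by
    refine (hint1.mono_set Set.Ioi_subset_Ici_self).congr_fun ?_ measurableSet_Ioi
    intro s hs
    have hrs : r s ≠ 0 := (hrpos s hs).ne'
    simp only [angularCurv]
    field_simp
  -- integrability of ks·kθ·r² on Ioi 0
  have hmeas : Measurable (fun s => radialCurv r z s * angularCurv r z s * r s ^ 2) := by
    unfold radialCurv angularCurv
    exact (((hrdc.measurable.mul hzddc.measurable).sub
      (hrddc.measurable.mul hzdc.measurable)).mul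
      (hzdc.measurable.div hrc.measurable)).mul (hrc.measurable.pow_const 2)
  have hprod_int : IntegrableOn
      (fun s => radialCurv r z s * angularCurv r z s * r s ^ 2) (Set.Ioi (0:ℝ)) := by
    refine (hint2.mono_set Set.Ioi_subset_Ici_self).mono' hmeas.aestronglyMeasurable ?_
    filter_upwards with s
    rw [Real.norm_eq_abs, abs_mul, abs_of_nonneg (sq_nonneg (r s))]
  set w : ℝ → ℝ := fun s => deriv z s ^ 2 + radialCurv r z s * angularCurv r z s * r s ^ 2
    with hwdef
  have hw_int : IntegrableOn w (Set.Ioi (0:ℝ)) := hu_int.add hprod_int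
  -- FTC for F = r·r'
  have hF : ∀ s : ℝ, HasDerivAt (fun t => r t * deriv r t)
      (deriv r s ^ 2 + r s * deriv (deriv r) s) s := by
    intro s
    have h := ((hrdiff s).hasDerivAt).fun_mul ((hrd s).hasDerivAt)
    exact h.congr_deriv (by ring)
  have key : ∀ t : ℝ, 0 ≤ t → r t * deriv r t = t - ∫ s in (0:ℝ)..t, w s := by
    intro t ht
    have hFTC : (∫ s in (0:ℝ)..t, (deriv r s ^ 2 + r s * deriv (deriv r) s))
        = r t * deriv r t - r 0 * deriv r 0 := by
      refine intervalIntegral.integral_eq_sub_of_hasDerivAt (fun x _ => hF x) ?_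
      exact ((hrdc.pow 2).add (hrc.mul hrddc)).intervalIntegrable 0 t
    have hwInt : IntervalIntegrable w volume 0 t := by
      rw [intervalIntegrable_iff]
      exact hw_int.mono_set (by rw [Set.uIoc_of_le ht]; exact Set.Ioc_subset_Ioi_self)
    have hcong : (∫ s in (0:ℝ)..t, (deriv r s ^ 2 + r s * deriv (deriv r) s))
        = ∫ s in (0:ℝ)..t, (1 - w s) := by
      refine intervalIntegral.integral_congr_ae ?_
      filter_upwards with x hx
      rw [Set.uIoc_of_le ht] at hx
      rw [hjac' x hx.1]
      simp only [hwdef]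
      linear_combination harc x hx.1.le
    have hsub : (∫ s in (0:ℝ)..t, (1 - w s)) = t - ∫ s in (0:ℝ)..t, w s := by
      rw [intervalIntegral.integral_sub (intervalIntegrable_const) hwInt]
      simp
    have hchain : t - ∫ s in (0:ℝ)..t, w s = r t * deriv r t - r 0 * deriv r 0 := by
      rw [← hsub, ← hcong, hFTC]
    rw [hr0] at hchain
    linarith
  -- the integral of w converges
  set c := ∫ s in Set.Ioi (0:ℝ), w s with hcdef
  have hG : Filter.Tendsto (fun t => ∫ s in (0:ℝ)..t, w s) Filter.atTop (nhds c) :=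
    intervalIntegral_tendsto_integral_Ioi 0 hw_int Filter.tendsto_id
  have hGev : ∀ᶠ t in Filter.atTop, (∫ s in (0:ℝ)..t, w s) ≤ c + 1 :=
    hG.eventually (eventually_le_nhds (lt_add_one c))
  have hev : ∀ᶠ t in Filter.atTop, t/2 ≤ r t * deriv r t ∧ 1 ≤ t := by
    filter_upwards [hGev, Filter.eventually_ge_atTop (max 1 (2*(c+1)))] with t h1 h2
    have ht1 : (1:ℝ) ≤ t := le_trans (le_max_left _ _) h2
    have ht2 : 2*(c+1) ≤ t := le_trans (le_max_right _ _) h2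
    have hk := key t (by linarith)
    constructor
    · linarith
    · exact ht1
  obtain ⟨T₀, hT₀⟩ := Filter.eventually_atTop.mp hev
  have hT₀1 : (1:ℝ) ≤ T₀ := (hT₀ T₀ le_rfl).2
  have hderpos : ∀ t ≥ T₀, 0 < deriv r t := by
    intro t ht
    obtain ⟨h1, h2⟩ := hT₀ t ht
    have hrt : 0 < r t := hrpos t (by linarith)
    nlinarith
  -- r grows: r t ^ 2 ≥ r T₀ ^2 + (t - T₀)
  have hr2 : ∀ t ≥ T₀, r T₀ ^ 2 + (t - T₀) ≤ r t ^ 2 := by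
    intro t ht
    have hder : ∀ x ∈ Set.uIcc T₀ t, HasDerivAt (fun y => r y ^ 2)
        (2 * (r x * deriv r x)) x := by
      intro x _
      have h := ((hrdiff x).hasDerivAt).fun_pow 2
      exact h.congr_deriv (by ring)
    have hFTC2 : (∫ x in T₀..t, 2 * (r x * deriv r x)) = r t ^ 2 - r T₀ ^ 2 :=
      intervalIntegral.integral_eq_sub_of_hasDerivAt hder
        ((continuous_const.mul (hrc.mul hrdc)).intervalIntegrable T₀ t)
    have hmono : (∫ x in T₀..t, (1:ℝ)) ≤ ∫ x in T₀..t, 2 * (r x * deriv r x) := by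
      refine intervalIntegral.integral_mono_on ht intervalIntegrable_const
        ((continuous_const.mul (hrc.mul hrdc)).intervalIntegrable T₀ t) ?_
      intro x hx
      obtain ⟨h1, h2⟩ := hT₀ x hx.1
      linarith
    rw [intervalIntegral.integral_const, smul_eq_mul, mul_one] at hmono
    linarith
  set T₁ := T₀ + 1 with hT₁def
  have hT₁pos : (0:ℝ) < T₁ := by linarith
  have hrge1 : ∀ s ≥ T₁, 1 ≤ r s := by
    intro s hs
    have h := hr2 s (by linarith)
    have hrs : 0 < r s := hrpos s (by linarith)
    nlinarith [sq_nonneg (r T₀)]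
  -- derivative of u = z'^2
  have hu' : ∀ s : ℝ, HasDerivAt (fun x => deriv z x ^ 2)
      (2 * (deriv z s * deriv (deriv z) s)) s := by
    intro s
    have h := ((hzd s).hasDerivAt).fun_pow 2
    exact h.congr_deriv (by ring)
  have harc' : ∀ s : ℝ, 0 < s →
      deriv z s * deriv (deriv z) s = -(deriv r s * deriv (deriv r) s) := by
    intro s hs
    have h1 : HasDerivAt (fun x => deriv r x ^ 2 + deriv z x ^ 2)
        (2 * (deriv r s * deriv (deriv r) s) + 2 * (deriv z s * deriv (deriv z) s)) s := by
      have ha := ((hrd s).hasDerivAt).fun_pow 2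
      have hb := ((hzd s).hasDerivAt).fun_pow 2
      have := ha.fun_add hb
      exact this.congr_deriv (by ring)
    have h2 : HasDerivAt (fun x => deriv r x ^ 2 + deriv z x ^ 2) 0 s := by
      have heq : (fun x => deriv r x ^ 2 + deriv z x ^ 2) =ᶠ[nhds s] (fun _ => (1:ℝ)) := by
        filter_upwards [Ioi_mem_nhds hs] with x hx
        exact harc x (le_of_lt hx)
      exact (hasDerivAt_const s (1:ℝ)).congr_of_eventuallyEq heq
    have := h1.unique h2
    linarith
  -- ψ = u' is integrable on Ioi T₁
  have hψint : IntegrableOn (fun s => 2 * (deriv z s * deriv (deriv z) s)) (Set.Ioi T₁) := by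
    have hsub : Set.Ioi T₁ ⊆ Set.Ici (0:ℝ) := fun x hx => le_of_lt (lt_trans hT₁pos hx)
    have hg : IntegrableOn
        (fun s => 2 * (|radialCurv r z s * angularCurv r z s| * r s ^ 2)) (Set.Ioi T₁) :=
      (hint2.mono_set hsub).const_mul 2
    refine hg.mono' (continuous_const.mul (hzdc.mul hzddc)).aestronglyMeasurable ?_
    rw [ae_restrict_iff' measurableSet_Ioi]
    filter_upwards with s hs
    have h0 : 0 < s := lt_trans hT₁pos hs
    have hrspos : 0 < r s := hrpos s h0
    have hr1s : 1 ≤ r s := hrge1 s (le_of_lt hs)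
    have habs : |deriv r s| ≤ 1 := by
      nlinarith [harc s h0.le, sq_abs (deriv r s), abs_nonneg (deriv r s), sq_nonneg (deriv z s)]
    rw [Real.norm_eq_abs, harc' s h0, hjac' s h0]
    have heq : |2 * -(deriv r s * -(radialCurv r z s * angularCurv r z s * r s))|
        = 2 * (|deriv r s| * (|radialCurv r z s * angularCurv r z s| * r s)) := by
      rw [show (2:ℝ) * -(deriv r s * -(radialCurv r z s * angularCurv r z s * r s))
        = 2 * (deriv r s * ((radialCurv r z s * angularCurv r z s) * r s)) by ring]
      rw [abs_mul, abs_mul, abs_mul, abs_of_nonneg hrspos.le, abs_two]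
    rw [heq]
    have hAnn : (0:ℝ) ≤ |radialCurv r z s * angularCurv r z s| := abs_nonneg _
    nlinarith [mul_nonneg hAnn hrspos.le]
  -- u converges
  have hus : ∀ t : ℝ, (∫ s in T₁..t, 2 * (deriv z s * deriv (deriv z) s))
      = deriv z t ^ 2 - deriv z T₁ ^ 2 := by
    intro t
    exact intervalIntegral.integral_eq_sub_of_hasDerivAt (fun x _ => hu' x)
      ((continuous_const.mul (hzdc.mul hzddc)).intervalIntegrable T₁ t)
  set L := deriv z T₁ ^ 2 + ∫ s in Set.Ioi T₁, 2 * (deriv z s * deriv (deriv z) s) with hLdef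
  have hulim : Filter.Tendsto (fun t => deriv z t ^ 2) Filter.atTop (nhds L) := by
    have h := intervalIntegral_tendsto_integral_Ioi T₁ hψint Filter.tendsto_id
    have h2 := h.const_add (deriv z T₁ ^ 2)
    refine h2.congr (fun t => ?_)
    simp only [id_eq]; linarith [hus t]
  -- L = 0
  have hL0 : L = 0 := by
    by_contra hL
    have hLnn : 0 ≤ L := ge_of_tendsto hulim (Filter.Eventually.of_forall fun t => sq_nonneg _)
    have hLpos : 0 < L := lt_of_le_of_ne hLnn (Ne.symm hL)
    have hevL : ∀ᶠ t in Filter.atTop, L/2 ≤ deriv z t ^ 2 :=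
      hulim.eventually (eventually_ge_nhds (by linarith))
    obtain ⟨T₂, hT₂⟩ := Filter.eventually_atTop.mp
      (hevL.and (Filter.eventually_ge_atTop (1:ℝ)))
    have hT₂1 : (1:ℝ) ≤ T₂ := (hT₂ T₂ le_rfl).2
    have hconst : Integrable (fun _ : ℝ => L/2) (volume.restrict (Set.Ici T₂)) := by
      have hsub : Set.Ici T₂ ⊆ Set.Ioi (0:ℝ) := fun x hx => lt_of_lt_of_le
        (by linarith : (0:ℝ) < T₂) hx
      refine (hu_int.mono_set hsub).mono' aestronglyMeasurable_const ?_
      rw [ae_restrict_iff' measurableSet_Ici]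
      filter_upwards with s hs
      rw [Real.norm_eq_abs, abs_of_nonneg (by linarith : (0:ℝ) ≤ L/2)]
      exact (hT₂ s hs).1
    rw [integrable_const_iff] at hconst
    rcases hconst with h | h
    · linarith
    · rw [isFiniteMeasure_restrict, Real.volume_Ici] at h
      exact (h rfl).elim
  have hu0 : Filter.Tendsto (fun t => deriv z t ^ 2) Filter.atTop (nhds 0) := hL0 ▸ hulim
  have h1 : Filter.Tendsto (fun t => deriv r t ^ 2) Filter.atTop (nhds 1) := by
    have heq : (fun t => (1:ℝ) - deriv z t ^ 2) =ᶠ[Filter.atTop] (fun t => deriv r t ^ 2) := by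
      filter_upwards [Filter.eventually_ge_atTop (0:ℝ)] with t ht
      have := harc t ht; linarith
    have h2 : Filter.Tendsto (fun t => (1:ℝ) - deriv z t ^ 2) Filter.atTop (nhds (1 - 0)) :=
      tendsto_const_nhds.sub hu0
    rw [sub_zero] at h2
    exact h2.congr' heq
  have hs : Filter.Tendsto (fun t => Real.sqrt (deriv r t ^ 2)) Filter.atTop (nhds 1) := by
    have h := (Real.continuous_sqrt.tendsto 1).comp h1
    simpa [Function.comp_def] using h
  refine hs.congr' ?_
  filter_upwards [Filter.eventually_ge_atTop T₀] with t ht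
  exact Real.sqrt_sq (hderpos t ht).le
end

section
/- The improper integral ∫₀^∞ k_s(s) k_θ(s) r(s) ds converges and equals 0; that is, lim_{S→∞} ∫₀^S k_s(s) k_θ(s) r(s) ds = 0. -/
open Real MeasureTheory Filter

theorem curvature_integral_zero
    (r z : ℝ → ℝ)
    (hr : ContDiff ℝ 2 r) (hz : ContDiff ℝ 2 z)
    (hr0 : r 0 = 0) (hr0' : deriv r 0 = 1)
    (hrpos : ∀ s > 0, 0 < r s)
    (harc : ∀ s ≥ 0, (deriv r s) ^ 2 + (deriv z s) ^ 2 = 1)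
    (hjac : ∀ s > 0,
      deriv (deriv r) s + radialCurv r z s * angularCurv r z s * r s = 0)
    (hint1 : IntegrableOn (fun s => (angularCurv r z s) ^ 2 * (r s) ^ 2) (Set.Ici 0))
    (hint2 : IntegrableOn (fun s => |radialCurv r z s * angularCurv r z s| * (r s) ^ 2) (Set.Ici 0))
    : Filter.Tendsto
        (fun S => ∫ s in (0 : ℝ)..S, radialCurv r z s * angularCurv r z s * r s)
        Filter.atTop (nhds 0) := by
  -- Smoothness bookkeeping
  have hr2 : ContDiff ℝ ((1:ℕ)+1) r := hr
  have hz2 : ContDiff ℝ ((1:ℕ)+1) z := hz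
  have hr1 : ContDiff ℝ 1 (deriv r) := (contDiff_succ_iff_deriv.mp hr2).2.2
  have hz1 : ContDiff ℝ 1 (deriv z) := (contDiff_succ_iff_deriv.mp hz2).2.2
  have cr : Continuous r := hr.continuous
  have cr' : Continuous (deriv r) := hr1.continuous
  have cr'' : Continuous (deriv (deriv r)) := hr1.continuous_deriv le_rfl
  have cz' : Continuous (deriv z) := hz1.continuous
  have hdr : ∀ x, HasDerivAt r (deriv r x) x :=
    fun x => (hr.differentiable (by norm_num) x).hasDerivAt
  have hdr' : ∀ x, HasDerivAt (deriv r) (deriv (deriv r) x) x :=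
    fun x => (hr1.differentiable (by norm_num) x).hasDerivAt
  have hdz' : ∀ x, HasDerivAt (deriv z) (deriv (deriv z) x) x :=
    fun x => (hz1.differentiable (by norm_num) x).hasDerivAt
  -- r ≥ 0 and |r'| ≤ 1 on [0,∞)
  have hrnn : ∀ s ≥ (0:ℝ), 0 ≤ r s := by
    intro s hs
    rcases eq_or_lt_of_le hs with h | h
    · rw [← h, hr0]
    · exact (hrpos s h).le
  have habs : ∀ s ≥ (0:ℝ), |deriv r s| ≤ 1 := by
    intro s hs
    have h := harc s hs
    have h2 : (deriv r s) ^ 2 ≤ 1 := by nlinarith [sq_nonneg (deriv z s)]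
    exact abs_le.2 ⟨by nlinarith, by nlinarith⟩
  -- Jacobi: the integrand equals -r'' for s > 0
  have hjac' : ∀ s > (0:ℝ),
      radialCurv r z s * angularCurv r z s * r s = - deriv (deriv r) s := by
    intro s hs; linarith [hjac s hs]
  -- arclength derivative identity for s > 0
  have harc' : ∀ s > (0:ℝ),
      deriv z s * deriv (deriv z) s = -(deriv r s * deriv (deriv r) s) := by
    intro s hs
    have hg : HasDerivAt (fun t => deriv r t ^ 2 + deriv z t ^ 2)
        ((2:ℕ) * deriv r s ^ (2-1) * deriv (deriv r) s
          + (2:ℕ) * deriv z s ^ (2-1) * deriv (deriv z) s) s :=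
      ((hdr' s).pow 2).add ((hdz' s).pow 2)
    have heq : (fun t => deriv r t ^ 2 + deriv z t ^ 2) =ᶠ[nhds s] (fun _ => (1:ℝ)) := by
      filter_upwards [eventually_gt_nhds hs] with t ht
      exact harc t ht.le
    have h0 : deriv (fun t => deriv r t ^ 2 + deriv z t ^ 2) s = 0 := by
      rw [heq.deriv_eq]; simp
    have h1 := hg.deriv
    rw [h0] at h1
    push_cast at h1
    nlinarith [h1]
  -- derivative of z'^2 for s > 0
  have hdz2 : ∀ s > (0:ℝ), HasDerivAt (fun t => deriv z t ^ 2)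
      (-(2 * (deriv r s * deriv (deriv r) s))) s := by
    intro s hs
    have h := (hdz' s).pow 2
    have h2 : ((2:ℕ):ℝ) * deriv z s ^ (2-1) * deriv (deriv z) s
        = -(2 * (deriv r s * deriv (deriv r) s)) := by
      push_cast
      nlinarith [harc' s hs]
    rwa [h2] at h
  -- a.e. s ≠ 0 w.r.t. restricted measure
  have hne : ∀ᵐ (s:ℝ) ∂(volume.restrict (Set.Ici (0:ℝ))), s ≠ 0 :=
    ae_restrict_of_ae (by rw [ae_iff]; simp)
  -- Integrability of z'^2 on [0,∞)
  have hz'int : IntegrableOn (fun s => deriv z s ^ 2) (Set.Ici (0:ℝ)) := by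
    refine hint1.congr ?_
    filter_upwards [hne, ae_restrict_mem measurableSet_Ici] with s hs0 hsmem
    have hrs : (0:ℝ) < r s := hrpos s (lt_of_le_of_ne hsmem (Ne.symm hs0))
    show (angularCurv r z s) ^ 2 * (r s) ^ 2 = deriv z s ^ 2
    unfold angularCurv
    field_simp
  -- Integrability of |r''| * r on [0,∞)
  have habs_int : IntegrableOn (fun s => |deriv (deriv r) s| * r s) (Set.Ici (0:ℝ)) := by
    refine hint2.congr ?_
    filter_upwards [hne, ae_restrict_mem measurableSet_Ici] with s hs0 hsmem
    have hspos : (0:ℝ) < s := lt_of_le_of_ne hsmem (Ne.symm hs0)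
    have hrs : (0:ℝ) < r s := hrpos s hspos
    show |radialCurv r z s * angularCurv r z s| * (r s) ^ 2 = |deriv (deriv r) s| * r s
    have h1 : |radialCurv r z s * angularCurv r z s * r s| * r s
        = |radialCurv r z s * angularCurv r z s| * (r s) ^ 2 := by
      rw [abs_mul, abs_of_nonneg hrs.le]; ring
    rw [← h1, hjac' s hspos, abs_neg]
  set C1 : ℝ := ∫ s in Set.Ici (0:ℝ), deriv z s ^ 2 with hC1
  set C2 : ℝ := ∫ s in Set.Ici (0:ℝ), |deriv (deriv r) s| * r s with hC2
  have hC1nn : 0 ≤ C1 := setIntegral_nonneg measurableSet_Ici (fun s _ => sq_nonneg _)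
  have hC2nn : 0 ≤ C2 := setIntegral_nonneg measurableSet_Ici
    (fun s hs => mul_nonneg (abs_nonneg _) (hrnn s hs))
  -- FTC for r·r'
  have hrr' : ∀ S : ℝ, r S * deriv r S
      = ∫ s in (0:ℝ)..S, (deriv r s ^ 2 + r s * deriv (deriv r) s) := by
    intro S
    have h := intervalIntegral.integral_eq_sub_of_hasDerivAt
      (f := fun t => r t * deriv r t)
      (f' := fun x => deriv r x ^ 2 + r x * deriv (deriv r) x)
      (a := 0) (b := S)
      (fun x _ => by
        have hm : HasDerivAt (fun t => r t * deriv r t)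
            (deriv r x * deriv r x + r x * deriv (deriv r) x) x := (hdr x).mul (hdr' x)
        simpa [sq, mul_comm] using hm)
      (((cr'.pow 2).add (cr.mul cr'')).intervalIntegrable 0 S)
    rw [h]
    show r S * deriv r S = r S * deriv r S - r 0 * deriv r 0
    rw [hr0]; ring
  -- bounds on the pieces, for S ≥ 0
  have hzbound : ∀ S ≥ (0:ℝ), (0:ℝ) ≤ (∫ s in (0:ℝ)..S, deriv z s ^ 2)
      ∧ (∫ s in (0:ℝ)..S, deriv z s ^ 2) ≤ C1 := by
    intro S hS
    rw [intervalIntegral.integral_of_le hS]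
    constructor
    · exact setIntegral_nonneg measurableSet_Ioc (fun s _ => sq_nonneg _)
    · refine setIntegral_mono_set hz'int
        (Eventually.of_forall (fun s => by simp only [Pi.zero_apply]; exact sq_nonneg _))
        (HasSubset.Subset.eventuallyLE ?_)
      exact fun x hx => le_of_lt hx.1
  have hrr''bound : ∀ S ≥ (0:ℝ), |∫ s in (0:ℝ)..S, r s * deriv (deriv r) s| ≤ C2 := by
    intro S hS
    refine le_trans (intervalIntegral.abs_integral_le_integral_abs hS) ?_
    have hcongr : ∫ s in (0:ℝ)..S, |r s * deriv (deriv r) s|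
        = ∫ s in (0:ℝ)..S, |deriv (deriv r) s| * r s := by
      refine intervalIntegral.integral_congr (fun x hx => ?_)
      rw [Set.uIcc_of_le hS] at hx
      rw [abs_mul, abs_of_nonneg (hrnn x hx.1), mul_comm]
    rw [hcongr, intervalIntegral.integral_of_le hS]
    refine setIntegral_mono_set habs_int ?_
      (HasSubset.Subset.eventuallyLE (fun x hx => le_of_lt hx.1))
    filter_upwards [ae_restrict_mem measurableSet_Ici] with s hs
    simp only [Pi.zero_apply]
    exact mul_nonneg (abs_nonneg _) (hrnn s hs)
  -- key lower bound  r S * r' S ≥ S - C1 - C2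
  have hkey : ∀ S ≥ (0:ℝ), S - C1 - C2 ≤ r S * deriv r S := by
    intro S hS
    have hsplit : ∫ s in (0:ℝ)..S, (deriv r s ^ 2 + r s * deriv (deriv r) s)
        = (∫ s in (0:ℝ)..S, deriv r s ^ 2) + ∫ s in (0:ℝ)..S, r s * deriv (deriv r) s :=
      intervalIntegral.integral_add ((cr'.pow 2).intervalIntegrable 0 S)
        ((cr.mul cr'').intervalIntegrable 0 S)
    have hone : ∫ s in (0:ℝ)..S, deriv r s ^ 2
        = S - ∫ s in (0:ℝ)..S, deriv z s ^ 2 := by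
      have : ∫ s in (0:ℝ)..S, deriv r s ^ 2 = ∫ s in (0:ℝ)..S, (1 - deriv z s ^ 2) := by
        refine intervalIntegral.integral_congr (fun x hx => ?_)
        rw [Set.uIcc_of_le hS] at hx
        have := harc x hx.1
        linarith
      rw [this, intervalIntegral.integral_sub (g := fun s => deriv z s ^ 2) (intervalIntegrable_const)
        ((cz'.pow 2).intervalIntegrable 0 S), intervalIntegral.integral_const]
      simp
    have h1 := (hzbound S hS).2
    have h2 := abs_le.mp (hrr''bound S hS)
    rw [hrr' S, hsplit, hone]
    linarith [h2.1]
  set S₀ : ℝ := C1 + C2 + 1 with hS₀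
  have hS₀pos : (0:ℝ) < S₀ := by positivity
  have hr'pos : ∀ S ≥ S₀, 0 < deriv r S := by
    intro S hS
    have h1 : (1:ℝ) ≤ r S * deriv r S := by
      have := hkey S (le_trans hS₀pos.le hS); linarith
    have h2 : 0 < r S := hrpos S (lt_of_lt_of_le hS₀pos hS)
    nlinarith
  have hrbig : ∀ S ≥ S₀, (1:ℝ) ≤ r S := by
    intro S hS
    have h1 : (1:ℝ) ≤ r S * deriv r S := by
      have := hkey S (le_trans hS₀pos.le hS); linarith
    have h2 : 0 < r S := hrpos S (lt_of_lt_of_le hS₀pos hS)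
    have h3 : deriv r S ≤ 1 := (abs_le.mp (habs S (le_trans hS₀pos.le hS))).2
    nlinarith
  -- integrability of -(2 r' r'') on [S₀, ∞)
  have hIciS₀ : Set.Ici S₀ ⊆ Set.Ici (0:ℝ) := fun x hx => le_trans hS₀pos.le hx
  have hint3 : IntegrableOn (fun s => -(2 * (deriv r s * deriv (deriv r) s))) (Set.Ici S₀) := by
    refine Integrable.mono ((habs_int.mono_set hIciS₀).const_mul 2)
      ((continuous_const.mul (cr'.mul cr'')).neg.aestronglyMeasurable) ?_
    filter_upwards [ae_restrict_mem measurableSet_Ici] with s hs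
    have h1 : |deriv r s| ≤ 1 := habs s (hIciS₀ hs)
    have h2 : (1:ℝ) ≤ r s := hrbig s hs
    rw [Real.norm_eq_abs, Real.norm_eq_abs, abs_neg]
    have hL1 : |2 * (deriv r s * deriv (deriv r) s)|
        = 2 * (|deriv r s| * |deriv (deriv r) s|) := by
      rw [abs_mul, abs_mul]; norm_num
    have hR1 : |2 * (|deriv (deriv r) s| * r s)| = 2 * (|deriv (deriv r) s| * r s) := by
      apply abs_of_nonneg
      have : (0:ℝ) ≤ r s := le_trans zero_le_one h2
      positivity
    rw [hL1, hR1]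
    nlinarith [abs_nonneg (deriv r s), abs_nonneg (deriv (deriv r) s)]
  -- z'^2 converges
  set L : ℝ := deriv z S₀ ^ 2 + ∫ s in Set.Ioi S₀, -(2 * (deriv r s * deriv (deriv r) s)) with hL
  have hlim : Tendsto (fun S => deriv z S ^ 2) atTop (nhds L) := by
    have htint : Tendsto (fun S => ∫ s in S₀..S, -(2 * (deriv r s * deriv (deriv r) s)))
        atTop (nhds (∫ s in Set.Ioi S₀, -(2 * (deriv r s * deriv (deriv r) s)))) :=
      intervalIntegral_tendsto_integral_Ioi S₀ (hint3.mono_set Set.Ioi_subset_Ici_self)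
        tendsto_id
    have hcongr : ∀ᶠ S in atTop, deriv z S₀ ^ 2
        + (∫ s in S₀..S, -(2 * (deriv r s * deriv (deriv r) s))) = deriv z S ^ 2 := by
      filter_upwards [eventually_ge_atTop S₀] with S hS
      have h := intervalIntegral.integral_eq_sub_of_hasDerivAt
        (f := fun t => deriv z t ^ 2)
        (f' := fun s => -(2 * (deriv r s * deriv (deriv r) s)))
        (a := S₀) (b := S)
        (fun x hx => by
          rw [Set.uIcc_of_le hS] at hx
          exact hdz2 x (lt_of_lt_of_le hS₀pos hx.1))
        ((continuous_const.mul (cr'.mul cr'')).neg.intervalIntegrable S₀ S)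
      rw [h]; ring
    exact Tendsto.congr' hcongr (tendsto_const_nhds.add htint)
  have hL0 : L = 0 := by
    have hLnn : 0 ≤ L := ge_of_tendsto hlim (Eventually.of_forall (fun x => sq_nonneg _))
    by_contra hne0
    have hLpos : 0 < L := lt_of_le_of_ne hLnn (Ne.symm hne0)
    have hev : ∀ᶠ S in atTop, L/2 ≤ deriv z S ^ 2 :=
      hlim.eventually (eventually_ge_nhds (by linarith))
    obtain ⟨T, hT⟩ := eventually_atTop.mp hev
    have hmeas : (volume.restrict (Set.Ici (0:ℝ))) {s | L/2 ≤ deriv z s ^ 2} < ⊤ :=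
      hz'int.measure_ge_lt_top (by linarith)
    have hsub : Set.Ici (max T 0) ⊆ {s | L/2 ≤ deriv z s ^ 2} :=
      fun s hs => hT s (le_trans (le_max_left _ _) hs)
    have hbig : (volume.restrict (Set.Ici (0:ℝ))) (Set.Ici (max T 0)) = ⊤ := by
      rw [Measure.restrict_apply measurableSet_Ici]
      have : Set.Ici (max T 0) ∩ Set.Ici (0:ℝ) = Set.Ici (max T 0) := by
        apply Set.inter_eq_left.mpr
        exact Set.Ici_subset_Ici.mpr (le_max_right _ _)
      rw [this, Real.volume_Ici]
    have := lt_of_le_of_lt (le_trans hbig.ge (measure_mono hsub)) hmeas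
    exact lt_irrefl _ this
  rw [hL0] at hlim
  -- r' → 1
  have hr'1 : Tendsto (deriv r) atTop (nhds 1) := by
    have hsq : Tendsto (fun S => 1 - deriv r S) atTop (nhds 0) := by
      refine squeeze_zero' ?_ ?_ hlim
      · filter_upwards [eventually_ge_atTop S₀] with S hS
        have := (abs_le.mp (habs S (hIciS₀ hS))).2
        linarith
      · filter_upwards [eventually_ge_atTop S₀] with S hS
        have h1 : 0 < deriv r S := hr'pos S hS
        have h2 : deriv r S ≤ 1 := (abs_le.mp (habs S (hIciS₀ hS))).2
        have h3 := harc S (hIciS₀ hS)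
        nlinarith
    have := tendsto_const_nhds.sub hsq (f := fun _ : ℝ => (1:ℝ))
    simpa using this
  -- conclusion
  have hfinal : ∀ᶠ S in atTop,
      (∫ s in (0:ℝ)..S, radialCurv r z s * angularCurv r z s * r s) = 1 - deriv r S := by
    filter_upwards [eventually_ge_atTop (0:ℝ)] with S hS
    have h1 : (∫ s in (0:ℝ)..S, radialCurv r z s * angularCurv r z s * r s)
        = ∫ s in (0:ℝ)..S, -(deriv (deriv r) s) := by
      refine intervalIntegral.integral_congr_ae (Eventually.of_forall (fun x hx => ?_))
      rw [Set.uIoc_of_le hS] at hx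
      exact hjac' x hx.1
    have h2 : (∫ s in (0:ℝ)..S, deriv (deriv r) s) = deriv r S - deriv r 0 :=
      intervalIntegral.integral_eq_sub_of_hasDerivAt (fun x _ => hdr' x)
        (cr''.intervalIntegrable 0 S)
    rw [h1, intervalIntegral.integral_neg, h2, hr0']
    ring
  have hEq : (fun S => ∫ s in (0:ℝ)..S, radialCurv r z s * angularCurv r z s * r s)
      =ᶠ[atTop] (fun S => 1 - deriv r S) := hfinal
  refine Tendsto.congr' hEq.symm ?_
  have := tendsto_const_nhds.sub hr'1 (f := fun _ : ℝ => (1:ℝ))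
  simpa using this
end

section
/- The limit lim_{s→∞} z′(s) = 0 holds. -/
open Real MeasureTheory

theorem deriv_z_tendsto_zero
    (r z : ℝ → ℝ)
    (hr : ContDiff ℝ 2 r) (hz : ContDiff ℝ 2 z)
    (hr0 : r 0 = 0) (hr0' : deriv r 0 = 1)
    (hrpos : ∀ s > 0, 0 < r s)
    (harc : ∀ s ≥ 0, (deriv r s) ^ 2 + (deriv z s) ^ 2 = 1)
    (hjac : ∀ s > 0,
      deriv (deriv r) s + radialCurv r z s * angularCurv r z s * r s = 0)
    (hint1 : IntegrableOn (fun s => (angularCurv r z s) ^ 2 * (r s) ^ 2) (Set.Ici 0))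
    (hint2 : IntegrableOn (fun s => |radialCurv r z s * angularCurv r z s| * (r s) ^ 2) (Set.Ici 0))
    : Filter.Tendsto (deriv z) Filter.atTop (nhds 0) := by
  -- regularity facts
  have hr2 : ContDiff ℝ (1 + 1) r := by
    have : ((2 : ℕ) : WithTop ℕ∞) = 1 + 1 := by norm_num
    rw [← this]; exact_mod_cast hr
  have hdr : Differentiable ℝ r := hr.differentiable (by norm_num)
  have hrd : ContDiff ℝ 1 (deriv r) := (contDiff_succ_iff_deriv.mp hr2).2.2
  have hdr' : Differentiable ℝ (deriv r) := hrd.differentiable one_ne_zero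
  have hcr : Continuous r := hr.continuous
  have hcr' : Continuous (deriv r) := hdr'.continuous
  have hcr'' : Continuous (deriv (deriv r)) := hrd.continuous_deriv le_rfl
  have hcz' : Continuous (deriv z) := hz.continuous_deriv (by norm_num)
  -- pointwise facts
  have hrnn : ∀ s ≥ 0, 0 ≤ r s := by
    intro s hs
    rcases eq_or_lt_of_le hs with h | h
    · simp [← h, hr0]
    · exact (hrpos s h).le
  have hr'le : ∀ s ≥ 0, (deriv r s) ^ 2 ≤ 1 := fun s hs => by
    nlinarith [harc s hs, sq_nonneg (deriv z s)]
  have habs1 : ∀ s ≥ 0, |deriv r s| ≤ 1 := fun s hs => by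
    rw [abs_le]; constructor <;> nlinarith [hr'le s hs]
  -- rewriting the integrands
  have hz2eq : ∀ s > 0, (angularCurv r z s) ^ 2 * (r s) ^ 2 = (deriv z s) ^ 2 := by
    intro s hs
    have h : r s ≠ 0 := (hrpos s hs).ne'
    rw [angularCurv, div_pow, div_mul_cancel₀ _ (pow_ne_zero 2 h)]
  have hrr''eq : ∀ s > 0,
      |radialCurv r z s * angularCurv r z s| * (r s) ^ 2 = |r s * deriv (deriv r) s| := by
    intro s hs
    have h1 := hjac s hs
    have h2 : deriv (deriv r) s = -(radialCurv r z s * angularCurv r z s * r s) := by linarith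
    have h4 : r s * -(radialCurv r z s * angularCurv r z s * r s)
        = -(radialCurv r z s * angularCurv r z s * (r s) ^ 2) := by ring
    rw [h2, h4, abs_neg]
    simp [abs_mul, abs_sq]
  -- the constants
  set C1 := ∫ s in Set.Ici (0:ℝ), (angularCurv r z s) ^ 2 * (r s) ^ 2 with hC1def
  set C2 := ∫ s in Set.Ici (0:ℝ), |radialCurv r z s * angularCurv r z s| * (r s) ^ 2 with hC2def
  have hC1nn : 0 ≤ C1 := setIntegral_nonneg measurableSet_Ici (fun s _ => by positivity)
  have hC2nn : 0 ≤ C2 := setIntegral_nonneg measurableSet_Ici (fun s _ => by positivity)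
  -- integral bounds
  have hIz : ∀ b ≥ (0:ℝ), (∫ s in (0:ℝ)..b, (deriv z s) ^ 2) ≤ C1 := by
    intro b hb
    rw [intervalIntegral.integral_of_le hb]
    have heq : ∫ s in Set.Ioc (0:ℝ) b, (deriv z s) ^ 2
        = ∫ s in Set.Ioc (0:ℝ) b, (angularCurv r z s) ^ 2 * (r s) ^ 2 :=
      setIntegral_congr_fun measurableSet_Ioc (fun s hs => (hz2eq s hs.1).symm)
    rw [heq]
    exact setIntegral_mono_set hint1 (ae_of_all _ (fun s => by positivity))
      ((Set.Ioc_subset_Ioi_self.trans Set.Ioi_subset_Ici_self).eventuallyLE)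
  have hIr'' : ∀ b ≥ (0:ℝ), (∫ s in (0:ℝ)..b, |r s * deriv (deriv r) s|) ≤ C2 := by
    intro b hb
    rw [intervalIntegral.integral_of_le hb]
    have heq : ∫ s in Set.Ioc (0:ℝ) b, |r s * deriv (deriv r) s|
        = ∫ s in Set.Ioc (0:ℝ) b, |radialCurv r z s * angularCurv r z s| * (r s) ^ 2 :=
      setIntegral_congr_fun measurableSet_Ioc (fun s hs => (hrr''eq s hs.1).symm)
    rw [heq]
    exact setIntegral_mono_set hint2 (ae_of_all _ (fun s => by positivity))
      ((Set.Ioc_subset_Ioi_self.trans Set.Ioi_subset_Ici_self).eventuallyLE)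
  -- ∫ (1 - r'^2) = ∫ z'^2 over [0, b]
  have hcongr : ∀ b ≥ (0:ℝ), (∫ s in (0:ℝ)..b, (1 - (deriv r s) ^ 2))
      = ∫ s in (0:ℝ)..b, (deriv z s) ^ 2 := by
    intro b hb
    apply intervalIntegral.integral_congr
    intro s hs
    rw [Set.uIcc_of_le hb] at hs
    have := harc s hs.1
    dsimp only
    linarith
  -- FTC for r * r'
  have hftcA : ∀ b, r b * deriv r b
      = ∫ s in (0:ℝ)..b, ((deriv r s) ^ 2 + r s * deriv (deriv r) s) := by
    intro b
    have h := intervalIntegral.integral_eq_sub_of_hasDerivAt (a := 0) (b := b)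
      (f := fun s => r s * deriv r s)
      (f' := fun s => (deriv r s) ^ 2 + r s * deriv (deriv r) s)
      (fun x _ => by
        have h := ((hdr x).hasDerivAt.mul (hdr' x).hasDerivAt)
        refine h.congr_deriv ?_; ring)
      (((hcr'.pow 2).add (hcr.mul hcr'')).intervalIntegrable 0 b)
    rw [h]; simp [hr0]
  -- the linear lower bound on r
  have hrlow : ∀ b ≥ (0:ℝ), b - (C1 + C2) ≤ r b := by
    intro b hb
    have hA := hftcA b
    have hsplit : (∫ s in (0:ℝ)..b, ((deriv r s) ^ 2 + r s * deriv (deriv r) s))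
        = (∫ s in (0:ℝ)..b, (deriv r s) ^ 2) + ∫ s in (0:ℝ)..b, r s * deriv (deriv r) s :=
      intervalIntegral.integral_add ((hcr'.pow 2).intervalIntegrable 0 b)
        ((hcr.mul hcr'').intervalIntegrable 0 b)
    have h1 : (∫ s in (0:ℝ)..b, (deriv r s) ^ 2)
        = b - ∫ s in (0:ℝ)..b, (deriv z s) ^ 2 := by
      have hsub : (∫ s in (0:ℝ)..b, (1 - (deriv r s) ^ 2))
          = b - ∫ s in (0:ℝ)..b, (deriv r s) ^ 2 := by
        rw [intervalIntegral.integral_sub (f := fun _ => (1:ℝ)) (g := fun s => deriv r s ^ 2) (intervalIntegrable_const)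
          ((hcr'.pow 2).intervalIntegrable 0 b)]
        simp
      have := hcongr b hb
      linarith
    have h2 : -C2 ≤ ∫ s in (0:ℝ)..b, r s * deriv (deriv r) s := by
      have habs := intervalIntegral.abs_integral_le_integral_abs (μ := volume) hb
        (f := fun s => r s * deriv (deriv r) s)
      have h5 := hIr'' b hb
      have h6 := neg_abs_le (∫ s in (0:ℝ)..b, r s * deriv (deriv r) s)
      linarith
    have h3 := hIz b hb
    have hup : r b * deriv r b ≤ r b := by
      have h4 : deriv r b ≤ 1 := by
        have := habs1 b hb; rw [abs_le] at this; exact this.2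
      nlinarith [hrnn b hb]
    rw [hsplit, h1] at hA
    linarith
  -- FTC bound for r * z'^2
  have hftcB : ∀ b ≥ (0:ℝ), r b * (deriv z b) ^ 2 ≤ C1 + 2 * C2 := by
    intro b hb
    set φ : ℝ → ℝ := fun s =>
      deriv r s * (1 - (deriv r s) ^ 2) - 2 * (r s * deriv (deriv r) s) * deriv r s with hφdef
    have hcφ : Continuous φ := by
      apply Continuous.sub
      · exact hcr'.mul ((continuous_const.sub (hcr'.pow 2)))
      · exact (continuous_const.mul (hcr.mul hcr'')).mul hcr'
    have hderiv : ∀ x ∈ Set.uIcc (0:ℝ) b,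
        HasDerivAt (fun s => r s * (1 - (deriv r s) ^ 2)) (φ x) x := by
      intro x _
      have h1 : HasDerivAt (fun s => (1 - (deriv r s) ^ 2))
          (-((2:ℕ) * deriv r x ^ (2 - 1) * deriv (deriv r) x)) x :=
        (((hdr' x).hasDerivAt.pow 2)).const_sub 1
      have h2 := (hdr x).hasDerivAt.mul h1
      refine h2.congr_deriv ?_
      simp only [hφdef]; norm_num; ring
    have hB := intervalIntegral.integral_eq_sub_of_hasDerivAt hderiv
      (hcφ.intervalIntegrable 0 b)
    have hb1 : r b * (1 - (deriv r b) ^ 2) = ∫ s in (0:ℝ)..b, φ s := by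
      rw [hB, hr0]; ring
    have hmono : (∫ s in (0:ℝ)..b, φ s)
        ≤ ∫ s in (0:ℝ)..b, ((1 - (deriv r s) ^ 2) + 2 * |r s * deriv (deriv r) s|) := by
      apply intervalIntegral.integral_mono_on hb (hcφ.intervalIntegrable 0 b)
      · exact (((continuous_const.sub (hcr'.pow 2))).add
          (continuous_const.mul (hcr.mul hcr'').abs)).intervalIntegrable 0 b
      · intro s hs
        have hs0 : (0:ℝ) ≤ s := hs.1
        have h2 := hr'le s hs0
        have h3 := habs1 s hs0
        have e0 : (0:ℝ) ≤ 1 - (deriv r s) ^ 2 := by linarith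
        have e1 : |deriv r s * (1 - (deriv r s) ^ 2)| ≤ 1 - (deriv r s) ^ 2 := by
          rw [abs_mul, abs_of_nonneg e0]
          nlinarith [abs_nonneg (deriv r s)]
        have e2 : |2 * (r s * deriv (deriv r) s) * deriv r s|
            ≤ 2 * |r s * deriv (deriv r) s| := by
          rw [abs_mul, abs_mul, abs_two]
          nlinarith [abs_nonneg (r s * deriv (deriv r) s)]
        calc φ s ≤ |φ s| := le_abs_self _
          _ ≤ |deriv r s * (1 - (deriv r s) ^ 2)|
              + |2 * (r s * deriv (deriv r) s) * deriv r s| := abs_sub _ _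
          _ ≤ _ := by linarith
    have hsplit : (∫ s in (0:ℝ)..b, ((1 - (deriv r s) ^ 2) + 2 * |r s * deriv (deriv r) s|))
        = (∫ s in (0:ℝ)..b, (1 - (deriv r s) ^ 2))
          + 2 * ∫ s in (0:ℝ)..b, |r s * deriv (deriv r) s| := by
      rw [intervalIntegral.integral_add (f := fun s => 1 - deriv r s ^ 2) (g := fun s => 2 * |r s * deriv (deriv r) s|)
        ((continuous_const.sub (hcr'.pow 2)).intervalIntegrable 0 b)
        ((continuous_const.mul (hcr.mul hcr'').abs).intervalIntegrable 0 b),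
        intervalIntegral.integral_const_mul]
    have h7 := hIz b hb
    have h8 := hIr'' b hb
    have h9 := hcongr b hb
    have h10 : r b * (deriv z b) ^ 2 = r b * (1 - (deriv r b) ^ 2) := by
      have h := harc b hb
      have : (deriv z b) ^ 2 = 1 - (deriv r b) ^ 2 := by linarith
      rw [this]
    rw [h10, hb1]
    rw [hsplit, h9] at hmono
    linarith
  -- conclusion
  set C := C1 + C2 with hCdef
  set M := C1 + 2 * C2 with hMdef
  have hub : ∀ᶠ b in Filter.atTop, (deriv z b) ^ 2 ≤ M / (b - C) := by
    filter_upwards [Filter.eventually_ge_atTop (C + 1)] with b hb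
    have hb0 : (0:ℝ) ≤ b := by simp only [hCdef] at hb; linarith
    have h1 := hftcB b hb0
    have h2 : (0:ℝ) < b - C := by linarith
    rw [le_div_iff₀ h2]
    nlinarith [sq_nonneg (deriv z b), hrlow b hb0]
  have hlim : Filter.Tendsto (fun b => M / (b - C)) Filter.atTop (nhds 0) := by
    apply Filter.Tendsto.div_atTop (tendsto_const_nhds)
    simpa [sub_eq_add_neg] using Filter.tendsto_atTop_add_const_right Filter.atTop (-C)
      Filter.tendsto_id
  have hsq : Filter.Tendsto (fun b => (deriv z b) ^ 2) Filter.atTop (nhds 0) :=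
    tendsto_of_tendsto_of_tendsto_of_le_of_le' tendsto_const_nhds hlim
      (Filter.Eventually.of_forall fun b => sq_nonneg _) hub
  have h2 : Filter.Tendsto (fun b => Real.sqrt ((deriv z b) ^ 2)) Filter.atTop (nhds 0) := by
    have := (Real.continuous_sqrt.tendsto 0).comp hsq
    rw [Real.sqrt_zero] at this; exact this
  rw [tendsto_zero_iff_abs_tendsto_zero]
  have h3 : (abs ∘ deriv z) = fun b => Real.sqrt ((deriv z b) ^ 2) := by
    funext b; simp [Function.comp, Real.sqrt_sq_eq_abs]
  rw [h3]
  exact h2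
end

section
/- If in addition r is not the identity function s ↦ s (equivalently, Σ is not a hyperplane), then there exists a nonempty open interval I ⊂ (0,∞) on which k_s(s) k_θ(s) > 0; that is, the principal curvatures k_s and k_θ are nonzero and of the same sign on I. -/
open Real MeasureTheory

theorem same_sign_interval
    (r z : ℝ → ℝ)
    (hr : ContDiff ℝ 2 r) (hz : ContDiff ℝ 2 z)
    (hr0 : r 0 = 0) (hr0' : deriv r 0 = 1)
    (hrpos : ∀ s > 0, 0 < r s)
    (harc : ∀ s ≥ 0, (deriv r s) ^ 2 + (deriv z s) ^ 2 = 1)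
    (hjac : ∀ s > 0,
      deriv (deriv r) s + radialCurv r z s * angularCurv r z s * r s = 0)
    (hint1 : IntegrableOn (fun s => (angularCurv r z s) ^ 2 * (r s) ^ 2) (Set.Ici 0))
    (hint2 : IntegrableOn (fun s => |radialCurv r z s * angularCurv r z s| * (r s) ^ 2) (Set.Ici 0))
    (hnotflat : ¬ ∀ s ≥ (0 : ℝ), r s = s)
    : ∃ α β : ℝ, 0 ≤ α ∧ α < β ∧
        ∀ s ∈ Set.Ioo α β, 0 < radialCurv r z s * angularCurv r z s := by
  -- r is C², so deriv r is C¹, deriv (deriv r) is continuous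
  have hr2 : ContDiff ℝ (1+1) r := by exact_mod_cast hr
  have hz2 : ContDiff ℝ (1+1) z := by exact_mod_cast hz
  have hdr : ContDiff ℝ 1 (deriv r) := (contDiff_succ_iff_deriv.mp hr2).2.2
  have hdz : ContDiff ℝ 1 (deriv z) := (contDiff_succ_iff_deriv.mp hz2).2.2
  have hddr : Continuous (deriv (deriv r)) := (hdr.iterate_deriv' 0 1).continuous
  have hddz : Continuous (deriv (deriv z)) := (hdz.iterate_deriv' 0 1).continuous
  -- Step 1: there exists s₀ > 0 with product > 0
  have hex : ∃ s₀ > 0, 0 < radialCurv r z s₀ * angularCurv r z s₀ := by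
    by_contra hc
    push_neg at hc
    -- then r'' ≥ 0 on (0,∞)
    have hconv : ∀ s ∈ interior (Set.Ici (0:ℝ)), 0 ≤ deriv (deriv r) s := by
      intro s hs
      rw [interior_Ici] at hs
      have hs0 : 0 < s := hs
      have := hjac s hs0
      have hle := hc s hs0
      nlinarith [hrpos s hs0]
    have hmono : MonotoneOn (deriv r) (Set.Ici 0) := by
      apply monotoneOn_of_deriv_nonneg (convex_Ici 0) hdr.continuous.continuousOn
      · exact (hdr.differentiable (by norm_num)).differentiableOn
      · exact hconv
    have hone : ∀ s ≥ (0:ℝ), deriv r s = 1 := by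
      intro s hs
      have h1 : 1 ≤ deriv r s := by
        have := hmono (Set.self_mem_Ici) (Set.mem_Ici.mpr hs) hs
        rwa [hr0'] at this
      have h2 : (deriv r s)^2 ≤ 1 := by nlinarith [harc s hs, sq_nonneg (deriv z s)]
      nlinarith
    apply hnotflat
    intro s hs
    -- h := r - id has zero derivative on Ici 0, h 0 = 0
    have hdiff : Differentiable ℝ (fun t => r t - t) :=
      (hr.differentiable (by norm_num)).sub differentiable_id
    have hderiv : ∀ t, deriv (fun t => r t - t) t = deriv r t - 1 := by
      intro t
      have := (((hr.differentiable (by norm_num)) t).hasDerivAt.sub (hasDerivAt_id t)).deriv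
      exact this
    have hmono2 : MonotoneOn (fun t => r t - t) (Set.Ici 0) := by
      apply monotoneOn_of_deriv_nonneg (convex_Ici 0) hdiff.continuous.continuousOn
        hdiff.differentiableOn
      intro x hx
      rw [interior_Ici] at hx
      rw [hderiv, hone x (le_of_lt hx)]; norm_num
    have hanti : AntitoneOn (fun t => r t - t) (Set.Ici 0) := by
      apply antitoneOn_of_deriv_nonpos (convex_Ici 0) hdiff.continuous.continuousOn
        hdiff.differentiableOn
      intro x hx
      rw [interior_Ici] at hx
      rw [hderiv, hone x (le_of_lt hx)]; norm_num
    have h1 := hmono2 Set.self_mem_Ici (Set.mem_Ici.mpr hs) hs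
    have h2 := hanti Set.self_mem_Ici (Set.mem_Ici.mpr hs) hs
    simp only [hr0] at h1 h2
    linarith
  obtain ⟨s₀, hs₀, hpos⟩ := hex
  -- continuity of the product at s₀
  have hcont : ContinuousAt (fun s => radialCurv r z s * angularCurv r z s) s₀ := by
    have hcr : ContinuousAt (radialCurv r z) s₀ := by
      unfold radialCurv
      exact ((hdr.continuous.continuousAt.mul hddz.continuousAt).sub
        (hddr.continuousAt.mul hdz.continuous.continuousAt))
    have hca : ContinuousAt (angularCurv r z) s₀ := by
      unfold angularCurv
      exact hdz.continuous.continuousAt.div hr.continuous.continuousAt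
        (ne_of_gt (hrpos s₀ hs₀))
    exact hcr.mul hca
  have hev : {x | 0 < radialCurv r z x * angularCurv r z x} ∈ nhds s₀ :=
    hcont.preimage_mem_nhds (Ioi_mem_nhds hpos)
  obtain ⟨ε, hε, hball⟩ := Metric.mem_nhds_iff.mp hev
  set δ := min ε s₀ with hδdef
  have hδ : 0 < δ := lt_min hε hs₀
  refine ⟨s₀ - δ/2, s₀ + δ/2, ?_, by linarith, ?_⟩
  · have : δ ≤ s₀ := min_le_right _ _
    linarith
  · intro s hs
    apply hball
    rw [Metric.mem_ball, Real.dist_eq]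
    have : δ ≤ ε := min_le_left _ _
    rw [abs_lt]
    constructor <;> [skip; skip] <;> cases hs with
    | intro h1 h2 => linarith
end

section
/- The integral ∫₁^∞ dt / r(t)² is finite. -/
open Real MeasureTheory

theorem nonparabolic
    (r z : ℝ → ℝ)
    (hr : ContDiff ℝ 2 r) (hz : ContDiff ℝ 2 z)
    (hr0 : r 0 = 0) (hr0' : deriv r 0 = 1)
    (hrpos : ∀ s > 0, 0 < r s)
    (harc : ∀ s ≥ 0, (deriv r s) ^ 2 + (deriv z s) ^ 2 = 1)
    (hjac : ∀ s > 0,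
      deriv (deriv r) s + radialCurv r z s * angularCurv r z s * r s = 0)
    (hint1 : IntegrableOn (fun s => (angularCurv r z s) ^ 2 * (r s) ^ 2) (Set.Ici 0))
    (hint2 : IntegrableOn (fun s => |radialCurv r z s * angularCurv r z s| * (r s) ^ 2) (Set.Ici 0))
    : IntegrableOn (fun t => 1 / (r t) ^ 2) (Set.Ici 1) := by
  -- regularity facts
  have h2r : ContDiff ℝ (1 + 1 : WithTop ℕ∞) r := hr
  have h2z : ContDiff ℝ (1 + 1 : WithTop ℕ∞) z := hz
  have hrd : Differentiable ℝ r := hr.differentiable (by norm_num)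
  have hr1 := (contDiff_succ_iff_deriv.mp h2r).2.2
  have hz1 := (contDiff_succ_iff_deriv.mp h2z).2.2
  have hrd' : Differentiable ℝ (deriv r) := hr1.differentiable (by norm_num)
  have hrc : Continuous r := hr.continuous
  have hrc' : Continuous (deriv r) := hrd'.continuous
  have hrc'' : Continuous (deriv (deriv r)) := hr1.continuous_deriv le_rfl
  have hzc' : Continuous (deriv z) := (hz1.differentiable (by norm_num)).continuous
  have hzc'' : Continuous (deriv (deriv z)) := hz1.continuous_deriv le_rfl
  -- measurability of curvature integrands
  have hRCc : Continuous (radialCurv r z) := by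
    unfold radialCurv
    exact (hrc'.mul hzc'').sub (hrc''.mul hzc')
  have hACm : Measurable (angularCurv r z) := by
    unfold angularCurv
    exact hzc'.measurable.div hrc.measurable
  have hg1m : Measurable (fun s => (angularCurv r z s) ^ 2 * (r s) ^ 2) :=
    (hACm.pow_const 2).mul (hrc.measurable.pow_const 2)
  have hg2m : Measurable (fun s => radialCurv r z s * angularCurv r z s * (r s) ^ 2) :=
    (hRCc.measurable.mul hACm).mul (hrc.measurable.pow_const 2)
  -- constants
  set C1 : ℝ := ∫ x in Set.Ici (0:ℝ), (angularCurv r z x) ^ 2 * (r x) ^ 2 with hC1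
  set C2 : ℝ := ∫ x in Set.Ici (0:ℝ), |radialCurv r z x * angularCurv r z x| * (r x) ^ 2 with hC2
  have hC1nn : 0 ≤ C1 := setIntegral_nonneg measurableSet_Ici (fun x _ => by positivity)
  have hC2nn : 0 ≤ C2 := setIntegral_nonneg measurableSet_Ici (fun x _ => by positivity)
  -- the fundamental lower bound  r s ≥ s - (C1 + C2)
  have key : ∀ s : ℝ, 0 ≤ s → s - (C1 + C2) ≤ r s := by
    intro s hs
    -- derivative of r * r'
    have hF : ∀ t : ℝ, HasDerivAt (fun u => r u * deriv r u)
        ((deriv r t) ^ 2 + r t * deriv (deriv r) t) t := by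
      intro t
      have h1 : HasDerivAt r (deriv r t) t := (hrd t).hasDerivAt
      have h2 : HasDerivAt (deriv r) (deriv (deriv r) t) t := (hrd' t).hasDerivAt
      have := h1.mul h2
      exact this.congr_deriv (by ring)
    have hFint : IntervalIntegrable
        (fun t => (deriv r t) ^ 2 + r t * deriv (deriv r) t) volume 0 s :=
      ((hrc'.pow 2).add (hrc.mul hrc'')).intervalIntegrable 0 s
    have hFTC : (∫ t in (0:ℝ)..s, ((deriv r t) ^ 2 + r t * deriv (deriv r) t))
        = r s * deriv r s := by
      rw [intervalIntegral.integral_eq_sub_of_hasDerivAt (fun t _ => hF t) hFint, hr0]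
      ring
    -- pointwise identity for the integrand
    have hpt : ∀ t ∈ Set.uIcc (0:ℝ) s,
        (deriv r t) ^ 2 + r t * deriv (deriv r) t
          = 1 - (angularCurv r z t) ^ 2 * (r t) ^ 2
              - radialCurv r z t * angularCurv r z t * (r t) ^ 2 := by
      intro t ht
      rw [Set.uIcc_of_le hs] at ht
      rcases eq_or_lt_of_le ht.1 with h | h
      · simp [← h, hr0, hr0']
      · have hrt : 0 < r t := hrpos t h
        have hkθ : angularCurv r z t ^ 2 * r t ^ 2 = deriv z t ^ 2 := by
          unfold angularCurv
          field_simp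
        have hdd : deriv (deriv r) t
            = -(radialCurv r z t * angularCurv r z t * r t) := by
          linarith [hjac t h]
        rw [hdd]
        linear_combination harc t ht.1 + hkθ
    -- interval integrabilities
    have hsub : Set.uIcc (0:ℝ) s ⊆ Set.Ici 0 := by
      rw [Set.uIcc_of_le hs]; exact Set.Icc_subset_Ici_self
    have hg1int : IntervalIntegrable
        (fun t => (angularCurv r z t) ^ 2 * (r t) ^ 2) volume 0 s :=
      (hint1.mono_set hsub).intervalIntegrable
    have habsint : IntervalIntegrable
        (fun t => |radialCurv r z t * angularCurv r z t| * (r t) ^ 2) volume 0 s :=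
      (hint2.mono_set hsub).intervalIntegrable
    have hg2abs : ∀ t, |radialCurv r z t * angularCurv r z t * (r t) ^ 2|
        = |radialCurv r z t * angularCurv r z t| * (r t) ^ 2 := by
      intro t
      rw [abs_mul, abs_of_nonneg (by positivity : (0:ℝ) ≤ (r t) ^ 2)]
    have hg2int : IntervalIntegrable
        (fun t => radialCurv r z t * angularCurv r z t * (r t) ^ 2) volume 0 s := by
      refine IntervalIntegrable.mono_fun habsint
        hg2m.aestronglyMeasurable ?_
      filter_upwards with t
      rw [Real.norm_eq_abs, Real.norm_eq_abs, hg2abs t]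
      exact le_abs_self _
    -- rewrite the FTC integral
    have hsplit : r s * deriv r s
        = s - (∫ t in (0:ℝ)..s, (angularCurv r z t) ^ 2 * (r t) ^ 2)
            - (∫ t in (0:ℝ)..s, radialCurv r z t * angularCurv r z t * (r t) ^ 2) := by
      rw [← hFTC, intervalIntegral.integral_congr hpt,
        intervalIntegral.integral_sub (IntervalIntegrable.sub
          (intervalIntegrable_const) hg1int) hg2int,
        intervalIntegral.integral_sub intervalIntegrable_const hg1int]
      simp
    -- bound the two integrals
    have hb1 : (∫ t in (0:ℝ)..s, (angularCurv r z t) ^ 2 * (r t) ^ 2) ≤ C1 := by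
      rw [intervalIntegral.integral_of_le hs, hC1]
      refine setIntegral_mono_set hint1 ?_ ?_
      · filter_upwards with x using by positivity
      · exact HasSubset.Subset.eventuallyLE (Set.Ioc_subset_Icc_self.trans Set.Icc_subset_Ici_self)
    have hb2 : (∫ t in (0:ℝ)..s, radialCurv r z t * angularCurv r z t * (r t) ^ 2) ≤ C2 := by
      have h1 := le_abs_self (∫ t in (0:ℝ)..s, radialCurv r z t * angularCurv r z t * (r t) ^ 2)
      have h2 := intervalIntegral.abs_integral_le_integral_abs (f :=
        fun t => radialCurv r z t * angularCurv r z t * (r t) ^ 2) (μ := volume) hs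
      have h3 : (∫ t in (0:ℝ)..s, |radialCurv r z t * angularCurv r z t * (r t) ^ 2|)
          = ∫ t in (0:ℝ)..s, |radialCurv r z t * angularCurv r z t| * (r t) ^ 2 :=
        intervalIntegral.integral_congr (fun t _ => hg2abs t)
      have h4 : (∫ t in (0:ℝ)..s, |radialCurv r z t * angularCurv r z t| * (r t) ^ 2) ≤ C2 := by
        rw [intervalIntegral.integral_of_le hs, hC2]
        refine setIntegral_mono_set hint2 ?_ ?_
        · filter_upwards with x using by positivity
        · exact HasSubset.Subset.eventuallyLE (Set.Ioc_subset_Icc_self.trans Set.Icc_subset_Ici_self)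
      linarith
    -- r s * deriv r s ≥ s - (C1 + C2)
    have hlow : s - (C1 + C2) ≤ r s * deriv r s := by
      rw [hsplit]; linarith
    -- deriv r s ≤ 1 and r s ≥ 0
    have hds : deriv r s ≤ 1 := by
      nlinarith [harc s hs, sq_nonneg (deriv z s), sq_nonneg (deriv r s - 1)]
    have hrs : 0 ≤ r s := by
      rcases eq_or_lt_of_le hs with h | h
      · rw [← h, hr0]
      · exact (hrpos s h).le
    nlinarith
  -- now the integrability
  set a : ℝ := max 1 (2 * (C1 + C2 + 1)) with ha
  have ha1 : (1:ℝ) ≤ a := le_max_left _ _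
  have ha0 : (0:ℝ) < a := by linarith
  have hcover : Set.Ici (1:ℝ) ⊆ Set.Icc 1 a ∪ Set.Ici a := by
    intro x hx
    rcases le_total x a with h | h
    · exact Or.inl ⟨hx, h⟩
    · exact Or.inr h
  refine (IntegrableOn.union ?_ ?_).mono_set hcover
  · -- compact part
    refine ContinuousOn.integrableOn_compact isCompact_Icc ?_
    refine ContinuousOn.div continuousOn_const ((hrc.pow 2).continuousOn) ?_
    intro x hx
    exact pow_ne_zero 2 (ne_of_gt (hrpos x (by linarith [hx.1])))
  · -- tail part, dominated by 4 / x^2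
    have hg : IntegrableOn (fun x => 4 * ((x:ℝ) ^ 2)⁻¹) (Set.Ici a) := by
      rw [integrableOn_Ici_iff_integrableOn_Ioi]
      have h := integrableOn_Ioi_rpow_of_lt (show (-2:ℝ) < -1 by norm_num) ha0
      have h' : IntegrableOn (fun x => ((x:ℝ) ^ 2)⁻¹) (Set.Ioi a) := by
        apply h.congr_fun ?_ measurableSet_Ioi
        intro x hx
        simp only [Set.mem_Ioi] at hx
        show x ^ (-2:ℝ) = ((x:ℝ) ^ 2)⁻¹
        rw [rpow_neg (le_of_lt (ha0.trans hx)), ← rpow_natCast x 2]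
        norm_num
      exact h'.const_mul 4
    refine Integrable.mono hg ?_ ?_
    · refine ContinuousOn.aestronglyMeasurable ?_ measurableSet_Ici
      refine ContinuousOn.div continuousOn_const ((hrc.pow 2).continuousOn) ?_
      intro x hx
      exact pow_ne_zero 2 (ne_of_gt (hrpos x (by simp at hx; linarith)))
    · rw [ae_restrict_iff' measurableSet_Ici]
      filter_upwards with x hx
      simp only [Set.mem_Ici] at hx
      have hxa : 2 * (C1 + C2 + 1) ≤ x := le_trans (le_max_right _ _) hx
      have hx1 : (1:ℝ) ≤ x := le_trans ha1 hx
      have hrx : x / 2 ≤ r x := by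
        have := key x (by linarith)
        linarith
      have hx2 : (0:ℝ) < x / 2 := by linarith
      have hsq : (x / 2) ^ 2 ≤ (r x) ^ 2 := by nlinarith
      have h5 : 1 / (r x) ^ 2 ≤ 1 / (x / 2) ^ 2 :=
        one_div_le_one_div_of_le (by positivity) hsq
      have h6 : 1 / (x / 2) ^ 2 = 4 * ((x:ℝ) ^ 2)⁻¹ := by
        field_simp; ring
      rw [Real.norm_eq_abs, Real.norm_eq_abs, abs_of_nonneg (by positivity),
        abs_of_nonneg (by positivity)]
      linarith
end

section
/- The volume V(s) = 4π ∫₀ˢ r(v)² dv of the geodesic ball of radius s centered at the pole satisfies lim_{s→∞} V(s)/s³ = 4π/3. In particular, V(s) has exactly cubic growth and Σ has large volume growth with volume-growth constant α_Σ = lim_{s→∞} V(s)/(v₃(1)s³) = 1, where v₃(1) = 4π/3 is the volume of the unit ball in R³. -/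
open Real MeasureTheory

private lemma aux_int1 (C s : ℝ) : ∫ v in (0:ℝ)..s, (2 * v + 2 * C) = s ^ 2 + 2 * C * s := by
  have h : ∀ x ∈ Set.uIcc (0:ℝ) s, HasDerivAt (fun x => x ^ 2 + 2 * C * x) (2 * x + 2 * C) x := by
    intro x _
    have h1 : HasDerivAt (fun x : ℝ => x ^ 2) (2 * x) x := by simpa using hasDerivAt_pow 2 x
    have h2 : HasDerivAt (fun x : ℝ => 2 * C * x) (2 * C) x := by
      simpa using (hasDerivAt_id x).const_mul (2 * C)
    exact h1.add h2
  rw [intervalIntegral.integral_eq_sub_of_hasDerivAt h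
    (by apply Continuous.intervalIntegrable; fun_prop)]
  ring

private lemma aux_int1' (C s : ℝ) : ∫ v in (0:ℝ)..s, (2 * v - 2 * C) = s ^ 2 - 2 * C * s := by
  have h : ∀ x ∈ Set.uIcc (0:ℝ) s, HasDerivAt (fun x => x ^ 2 - 2 * C * x) (2 * x - 2 * C) x := by
    intro x _
    have h1 : HasDerivAt (fun x : ℝ => x ^ 2) (2 * x) x := by simpa using hasDerivAt_pow 2 x
    have h2 : HasDerivAt (fun x : ℝ => 2 * C * x) (2 * C) x := by
      simpa using (hasDerivAt_id x).const_mul (2 * C)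
    exact h1.sub h2
  rw [intervalIntegral.integral_eq_sub_of_hasDerivAt h
    (by apply Continuous.intervalIntegrable; fun_prop)]
  ring

private lemma aux_int2 (C s : ℝ) : ∫ v in (0:ℝ)..s, (v ^ 2 + 2 * C * v) = s ^ 3 / 3 + C * s ^ 2 := by
  have h : ∀ x ∈ Set.uIcc (0:ℝ) s,
      HasDerivAt (fun x => x ^ 3 / 3 + C * x ^ 2) (x ^ 2 + 2 * C * x) x := by
    intro x _
    have h1 : HasDerivAt (fun x : ℝ => x ^ 3 / 3) (x ^ 2) x := by
      have := (hasDerivAt_pow 3 x).div_const 3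
      exact this.congr_deriv (by norm_num)
    have h2 : HasDerivAt (fun x : ℝ => C * x ^ 2) (2 * C * x) x := by
      have := (hasDerivAt_pow 2 x).const_mul C
      exact this.congr_deriv (by ring)
    exact h1.add h2
  rw [intervalIntegral.integral_eq_sub_of_hasDerivAt h
    (by apply Continuous.intervalIntegrable; fun_prop)]
  ring

private lemma aux_int2' (C s : ℝ) : ∫ v in (0:ℝ)..s, (v ^ 2 - 2 * C * v) = s ^ 3 / 3 - C * s ^ 2 := by
  have h : ∀ x ∈ Set.uIcc (0:ℝ) s,
      HasDerivAt (fun x => x ^ 3 / 3 - C * x ^ 2) (x ^ 2 - 2 * C * x) x := by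
    intro x _
    have h1 : HasDerivAt (fun x : ℝ => x ^ 3 / 3) (x ^ 2) x := by
      have := (hasDerivAt_pow 3 x).div_const 3
      exact this.congr_deriv (by norm_num)
    have h2 : HasDerivAt (fun x : ℝ => C * x ^ 2) (2 * C * x) x := by
      have := (hasDerivAt_pow 2 x).const_mul C
      exact this.congr_deriv (by ring)
    exact h1.sub h2
  rw [intervalIntegral.integral_eq_sub_of_hasDerivAt h
    (by apply Continuous.intervalIntegrable; fun_prop)]
  ring

theorem volume_cubic_growth
    (r z : ℝ → ℝ)
    (hr : ContDiff ℝ 2 r) (hz : ContDiff ℝ 2 z)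
    (hr0 : r 0 = 0) (hr0' : deriv r 0 = 1)
    (hrpos : ∀ s > 0, 0 < r s)
    (harc : ∀ s ≥ 0, (deriv r s) ^ 2 + (deriv z s) ^ 2 = 1)
    (hjac : ∀ s > 0,
      deriv (deriv r) s + radialCurv r z s * angularCurv r z s * r s = 0)
    (hint1 : IntegrableOn (fun s => (angularCurv r z s) ^ 2 * (r s) ^ 2) (Set.Ici 0))
    (hint2 : IntegrableOn (fun s => |radialCurv r z s * angularCurv r z s| * (r s) ^ 2) (Set.Ici 0))
    : Filter.Tendsto
        (fun s => (4 * Real.pi * ∫ v in (0 : ℝ)..s, (r v) ^ 2) / s ^ 3)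
        Filter.atTop (nhds (4 * Real.pi / 3)) ∧
      Filter.Tendsto
        (fun s => (4 * Real.pi * ∫ v in (0 : ℝ)..s, (r v) ^ 2) / (4 * Real.pi / 3 * s ^ 3))
        Filter.atTop (nhds 1) := by
  -- basic regularity
  have hr2 : ContDiff ℝ (1 + 1 : WithTop ℕ∞) r := by
    have h21 : (2 : WithTop ℕ∞) = 1 + 1 := by norm_num
    rw [← h21]
    exact hr
  have hrd : Differentiable ℝ r := hr.differentiable (by norm_num)
  have hrder : ContDiff ℝ 1 (deriv r) := (contDiff_succ_iff_deriv.mp hr2).2.2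
  have hrd' : Differentiable ℝ (deriv r) := (contDiff_one_iff_deriv.mp hrder).1
  have hrc'' : Continuous (deriv (deriv r)) := (contDiff_one_iff_deriv.mp hrder).2
  -- the integrable error function H
  set H : ℝ → ℝ := fun v =>
    (angularCurv r z v) ^ 2 * (r v) ^ 2 + |radialCurv r z v * angularCurv r z v| * (r v) ^ 2
    with hHdef
  have hHnn : ∀ v, 0 ≤ H v := fun v => by
    have : (0:ℝ) ≤ (angularCurv r z v) ^ 2 * (r v) ^ 2 := by positivity
    have : (0:ℝ) ≤ |radialCurv r z v * angularCurv r z v| * (r v) ^ 2 := by positivity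
    simp only [hHdef]; positivity
  have hHint : IntegrableOn H (Set.Ici 0) := hint1.add hint2
  set C : ℝ := ∫ v in Set.Ici (0:ℝ), H v with hCdef
  have hCnn : 0 ≤ C := setIntegral_nonneg measurableSet_Ici fun v _ => hHnn v
  -- ∫₀ˢ H ≤ C
  have hIH : ∀ s ≥ (0:ℝ), (∫ v in (0:ℝ)..s, H v) ≤ C := by
    intro s hs
    rw [intervalIntegral.integral_of_le hs]
    exact setIntegral_mono_set hHint
      (Filter.Eventually.of_forall fun v => hHnn v)
      (HasSubset.Subset.eventuallyLE (fun x hx => hx.1.le))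
  have hIHint : ∀ s : ℝ, 0 ≤ s → IntervalIntegrable H volume 0 s := fun s hs =>
    (intervalIntegrable_iff_integrableOn_Ioc_of_le hs).mpr
      (hHint.mono_set fun x hx => hx.1.le)
  -- derivative of r * r'
  have hds : ∀ v : ℝ, HasDerivAt (fun x => r x * deriv r x)
      (deriv r v ^ 2 + r v * deriv (deriv r) v) v := by
    intro v
    have := ((hrd v).hasDerivAt).mul ((hrd' v).hasDerivAt)
    exact this.congr_deriv (by ring)
  have hcont' : Continuous fun v => deriv r v ^ 2 + r v * deriv (deriv r) v := by
    have h1 : Continuous (deriv r) := hrd'.continuous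
    exact (h1.pow 2).add (hrd.continuous.mul hrc'')
  -- FTC for r * r'
  have hF : ∀ s : ℝ, r s * deriv r s
      = ∫ v in (0:ℝ)..s, (deriv r v ^ 2 + r v * deriv (deriv r) v) := by
    intro s
    have := intervalIntegral.integral_eq_sub_of_hasDerivAt
      (f := fun x => r x * deriv r x)
      (f' := fun v => deriv r v ^ 2 + r v * deriv (deriv r) v)
      (fun x _ => hds x) (hcont'.intervalIntegrable 0 s)
    rw [this]
    simp [hr0]
  -- key pointwise bound: |(r r')' - 1| ≤ H on [0,∞)
  have hkey : ∀ v : ℝ, 0 ≤ v → |deriv r v ^ 2 + r v * deriv (deriv r) v - 1| ≤ H v := by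
    intro v hv
    rcases eq_or_lt_of_le hv with h | h
    · rw [← h, hr0, hr0']
      simpa using hHnn 0
    · have hrv : 0 < r v := hrpos v h
      have hj := hjac v h
      have hzz : deriv z v ^ 2 = 1 - deriv r v ^ 2 := by
        have := harc v (le_of_lt h); linarith
      have hang : (angularCurv r z v) ^ 2 * (r v) ^ 2 = deriv z v ^ 2 := by
        rw [angularCurv, div_pow, div_mul_cancel₀]
        positivity
      have hEeq : deriv r v ^ 2 + r v * deriv (deriv r) v - 1
          = -((angularCurv r z v) ^ 2 * (r v) ^ 2
              + radialCurv r z v * angularCurv r z v * (r v) ^ 2) := by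
        have hdd : deriv (deriv r) v = -(radialCurv r z v * angularCurv r z v * r v) := by
          linarith
        rw [hdd]
        linear_combination hang + hzz
      rw [hEeq, abs_neg]
      calc |(angularCurv r z v) ^ 2 * (r v) ^ 2
              + radialCurv r z v * angularCurv r z v * (r v) ^ 2|
          ≤ |(angularCurv r z v) ^ 2 * (r v) ^ 2|
              + |radialCurv r z v * angularCurv r z v * (r v) ^ 2| := abs_add_le _ _
        _ = H v := by
            rw [abs_of_nonneg (by positivity), abs_mul, abs_of_nonneg (by positivity : (0:ℝ) ≤ (r v)^2)]
  -- bounds on r s * r' s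
  have hfub : ∀ s : ℝ, 0 ≤ s → r s * deriv r s ≤ s + C := by
    intro s hs
    rw [hF s]
    calc (∫ v in (0:ℝ)..s, (deriv r v ^ 2 + r v * deriv (deriv r) v))
        ≤ ∫ v in (0:ℝ)..s, (1 + H v) := by
          apply intervalIntegral.integral_mono_on hs (hcont'.intervalIntegrable 0 s)
            (intervalIntegrable_const.add (hIHint s hs))
          intro v hv
          have := hkey v hv.1
          have := abs_le.mp this
          linarith [this.2]
      _ = s + ∫ v in (0:ℝ)..s, H v := by
          rw [intervalIntegral.integral_add intervalIntegrable_const (hIHint s hs)]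
          simp
      _ ≤ s + C := by linarith [hIH s hs]
  have hflb : ∀ s : ℝ, 0 ≤ s → s - C ≤ r s * deriv r s := by
    intro s hs
    rw [hF s]
    calc s - C ≤ s - ∫ v in (0:ℝ)..s, H v := by linarith [hIH s hs]
      _ = ∫ v in (0:ℝ)..s, (1 - H v) := by
          rw [intervalIntegral.integral_sub intervalIntegrable_const (hIHint s hs)]
          simp
      _ ≤ ∫ v in (0:ℝ)..s, (deriv r v ^ 2 + r v * deriv (deriv r) v) := by
          apply intervalIntegral.integral_mono_on hs
            (intervalIntegrable_const.sub (hIHint s hs)) (hcont'.intervalIntegrable 0 s)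
          intro v hv
          have := abs_le.mp (hkey v hv.1)
          linarith [this.1]
  -- FTC for r²
  have hG : ∀ s : ℝ, r s ^ 2 = ∫ v in (0:ℝ)..s, 2 * (r v * deriv r v) := by
    intro s
    have hds2 : ∀ v : ℝ, HasDerivAt (fun x => r x ^ 2) (2 * (r v * deriv r v)) v := by
      intro v
      have := ((hrd v).hasDerivAt).pow 2
      exact this.congr_deriv (by ring)
    have := intervalIntegral.integral_eq_sub_of_hasDerivAt
      (f := fun x => r x ^ 2) (f' := fun v => 2 * (r v * deriv r v))
      (fun x _ => hds2 x)
      ((continuous_const.mul (hrd.continuous.mul hrd'.continuous)).intervalIntegrable 0 s)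
    rw [this]
    simp [hr0]
  -- bounds on r²
  have hr2ub : ∀ s : ℝ, 0 ≤ s → r s ^ 2 ≤ s ^ 2 + 2 * C * s := by
    intro s hs
    rw [hG s]
    calc (∫ v in (0:ℝ)..s, 2 * (r v * deriv r v))
        ≤ ∫ v in (0:ℝ)..s, (2 * v + 2 * C) := by
          apply intervalIntegral.integral_mono_on hs
            ((continuous_const.mul (hrd.continuous.mul hrd'.continuous)).intervalIntegrable 0 s)
            (((continuous_const.mul continuous_id').add continuous_const).intervalIntegrable 0 s)
          intro v hv
          have := hfub v hv.1
          show 2 * (r v * deriv r v) ≤ 2 * v + 2 * C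
          linarith
      _ = s ^ 2 + 2 * C * s := aux_int1 C s
  have hr2lb : ∀ s : ℝ, 0 ≤ s → s ^ 2 - 2 * C * s ≤ r s ^ 2 := by
    intro s hs
    rw [hG s]
    calc s ^ 2 - 2 * C * s = ∫ v in (0:ℝ)..s, (2 * v - 2 * C) := (aux_int1' C s).symm
      _ ≤ ∫ v in (0:ℝ)..s, 2 * (r v * deriv r v) := by
          apply intervalIntegral.integral_mono_on hs
            (((continuous_const.mul continuous_id').sub continuous_const).intervalIntegrable 0 s)
            ((continuous_const.mul (hrd.continuous.mul hrd'.continuous)).intervalIntegrable 0 s)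
          intro v hv
          have := hflb v hv.1
          show 2 * v - 2 * C ≤ 2 * (r v * deriv r v)
          linarith
  -- bounds on ∫₀ˢ r²
  have hVub : ∀ s : ℝ, 0 ≤ s → (∫ v in (0:ℝ)..s, (r v) ^ 2) ≤ s ^ 3 / 3 + C * s ^ 2 := by
    intro s hs
    calc (∫ v in (0:ℝ)..s, (r v) ^ 2)
        ≤ ∫ v in (0:ℝ)..s, (v ^ 2 + 2 * C * v) := by
          apply intervalIntegral.integral_mono_on hs
            ((hrd.continuous.pow 2).intervalIntegrable 0 s)
            (((continuous_pow 2).add (continuous_const.mul continuous_id')).intervalIntegrable 0 s)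
          intro v hv
          exact hr2ub v hv.1
      _ = s ^ 3 / 3 + C * s ^ 2 := aux_int2 C s
  have hVlb : ∀ s : ℝ, 0 ≤ s → s ^ 3 / 3 - C * s ^ 2 ≤ ∫ v in (0:ℝ)..s, (r v) ^ 2 := by
    intro s hs
    calc s ^ 3 / 3 - C * s ^ 2 = ∫ v in (0:ℝ)..s, (v ^ 2 - 2 * C * v) := (aux_int2' C s).symm
      _ ≤ ∫ v in (0:ℝ)..s, (r v) ^ 2 := by
          apply intervalIntegral.integral_mono_on hs
            (((continuous_pow 2).sub (continuous_const.mul continuous_id')).intervalIntegrable 0 s)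
            ((hrd.continuous.pow 2).intervalIntegrable 0 s)
          intro v hv
          exact hr2lb v hv.1
  -- squeeze
  have hπ : (0:ℝ) < Real.pi := Real.pi_pos
  have hmain : Filter.Tendsto
      (fun s => (4 * Real.pi * ∫ v in (0 : ℝ)..s, (r v) ^ 2) / s ^ 3)
      Filter.atTop (nhds (4 * Real.pi / 3)) := by
    have hlow : Filter.Tendsto (fun s : ℝ => 4 * Real.pi / 3 - 4 * Real.pi * C / s)
        Filter.atTop (nhds (4 * Real.pi / 3)) := by
      have h0 : Filter.Tendsto (fun s : ℝ => 4 * Real.pi * C / s) Filter.atTop (nhds 0) :=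
        Filter.Tendsto.div_atTop tendsto_const_nhds Filter.tendsto_id
      simpa using tendsto_const_nhds.sub h0
    have hhigh : Filter.Tendsto (fun s : ℝ => 4 * Real.pi / 3 + 4 * Real.pi * C / s)
        Filter.atTop (nhds (4 * Real.pi / 3)) := by
      have h0 : Filter.Tendsto (fun s : ℝ => 4 * Real.pi * C / s) Filter.atTop (nhds 0) :=
        Filter.Tendsto.div_atTop tendsto_const_nhds Filter.tendsto_id
      simpa using tendsto_const_nhds.add h0
    refine tendsto_of_tendsto_of_tendsto_of_le_of_le' hlow hhigh ?_ ?_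
    · filter_upwards [Filter.eventually_gt_atTop (0:ℝ)] with s hs
      have h3 : (0:ℝ) < s ^ 3 := by positivity
      rw [le_div_iff₀ h3]
      have hb := hVlb s hs.le
      have hmul : 4 * Real.pi * (s ^ 3 / 3 - C * s ^ 2)
          ≤ 4 * Real.pi * ∫ v in (0:ℝ)..s, (r v) ^ 2 :=
        mul_le_mul_of_nonneg_left hb (by positivity)
      have heq : (4 * Real.pi / 3 - 4 * Real.pi * C / s) * s ^ 3
          = 4 * Real.pi * (s ^ 3 / 3 - C * s ^ 2) := by
        field_simp
      rw [heq]
      exact hmul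
    · filter_upwards [Filter.eventually_gt_atTop (0:ℝ)] with s hs
      have h3 : (0:ℝ) < s ^ 3 := by positivity
      rw [div_le_iff₀ h3]
      have hb := hVub s hs.le
      have hmul : 4 * Real.pi * ∫ v in (0:ℝ)..s, (r v) ^ 2
          ≤ 4 * Real.pi * (s ^ 3 / 3 + C * s ^ 2) :=
        mul_le_mul_of_nonneg_left hb (by positivity)
      have heq : (4 * Real.pi / 3 + 4 * Real.pi * C / s) * s ^ 3
          = 4 * Real.pi * (s ^ 3 / 3 + C * s ^ 2) := by
        field_simp
      rw [heq]
      exact hmul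
  refine ⟨hmain, ?_⟩
  have hcongr : ∀ᶠ s in Filter.atTop,
      ((4 * Real.pi * ∫ v in (0 : ℝ)..s, (r v) ^ 2) / s ^ 3) * (3 / (4 * Real.pi))
        = (4 * Real.pi * ∫ v in (0 : ℝ)..s, (r v) ^ 2) / (4 * Real.pi / 3 * s ^ 3) := by
    filter_upwards [Filter.eventually_gt_atTop (0:ℝ)] with s hs
    have hs3 : s ^ 3 ≠ 0 := by positivity
    have hπ0 : Real.pi ≠ 0 := Real.pi_ne_zero
    field_simp
  have := hmain.mul_const (3 / (4 * Real.pi))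
  have hval : (4 * Real.pi / 3) * (3 / (4 * Real.pi)) = 1 := by
    field_simp
  rw [hval] at this
  exact Filter.Tendsto.congr' hcongr this
end

section
/- There exist constants C > 0 and s₀ ≥ 1 such that for all s ≥ s₀ one has |∫₀ˢ r(v)² dv − s³/3| ≤ C·s²; equivalently, the ball volume V(s) = 4π ∫₀ˢ r(v)² dv satisfies (4π/3)s³ − 4πC s² ≤ V(s) ≤ (4π/3)s³ + 4πC s² for all s ≥ s₀. -/
open Real MeasureTheory

theorem volume_asymptotics
    (r z : ℝ → ℝ)
    (hr : ContDiff ℝ 2 r) (hz : ContDiff ℝ 2 z)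
    (hr0 : r 0 = 0) (hr0' : deriv r 0 = 1)
    (hrpos : ∀ s > 0, 0 < r s)
    (harc : ∀ s ≥ 0, (deriv r s) ^ 2 + (deriv z s) ^ 2 = 1)
    (hjac : ∀ s > 0,
      deriv (deriv r) s + radialCurv r z s * angularCurv r z s * r s = 0)
    (hint1 : IntegrableOn (fun s => (angularCurv r z s) ^ 2 * (r s) ^ 2) (Set.Ici 0))
    (hint2 : IntegrableOn (fun s => |radialCurv r z s * angularCurv r z s| * (r s) ^ 2) (Set.Ici 0))
    : ∃ C > (0 : ℝ), ∃ s₀ ≥ (1 : ℝ), ∀ s ≥ s₀,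
      |(∫ v in (0 : ℝ)..s, (r v) ^ 2) - s ^ 3 / 3| ≤ C * s ^ 2 := by
  -- regularity
  rw [← one_add_one_eq_two] at hr
  have hdr : Differentiable ℝ r := (contDiff_succ_iff_deriv.mp hr).1
  have hcr' : ContDiff ℝ 1 (deriv r) := (contDiff_succ_iff_deriv.mp hr).2.2
  have hdr' : Differentiable ℝ (deriv r) := (contDiff_one_iff_deriv.mp hcr').1
  have hcd2 : Continuous (deriv (deriv r)) := (contDiff_one_iff_deriv.mp hcr').2
  have hcr : Continuous r := hdr.continuous
  have hcdr : Continuous (deriv r) := hdr'.continuous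
  -- the dominating function
  set h : ℝ → ℝ := fun v =>
      |radialCurv r z v * angularCurv r z v| * (r v) ^ 2
      + (angularCurv r z v) ^ 2 * (r v) ^ 2 with hh_def
  have hh_int : IntegrableOn h (Set.Ici 0) := hint2.add hint1
  have hh_nonneg : ∀ v, 0 ≤ h v := fun v => by positivity
  set D : ℝ := ∫ v in Set.Ici (0:ℝ), h v with hD_def
  have hD0 : 0 ≤ D := setIntegral_nonneg measurableSet_Ici fun v _ => hh_nonneg v
  -- continuity of F = (r')² + r r'' - 1
  set F : ℝ → ℝ := fun v => deriv r v * deriv r v + r v * deriv (deriv r) v - 1 with hF_def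
  have hFc : Continuous F := by
    apply Continuous.sub _ continuous_const
    exact (hcdr.mul hcdr).add (hcr.mul hcd2)
  -- pointwise bound  |F v| ≤ h v  for v > 0
  have hFh : ∀ v > (0:ℝ), |F v| ≤ h v := by
    intro v hv
    have hrv : 0 < r v := hrpos v hv
    have hj := hjac v hv
    have hd2 : deriv (deriv r) v = -(radialCurv r z v * angularCurv r z v) * r v := by
      linarith
    have harcv := harc v hv.le
    have hz2 : deriv z v ^ 2 = (angularCurv r z v) ^ 2 * (r v) ^ 2 := by
      rw [angularCurv]; field_simp
    have hFv : F v = -(radialCurv r z v * angularCurv r z v) * (r v) ^ 2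
        - (angularCurv r z v) ^ 2 * (r v) ^ 2 := by
      rw [hF_def]; simp only; rw [hd2, ← hz2]; nlinarith [harcv]
    rw [hFv, hh_def]
    have h1 : |(-(radialCurv r z v * angularCurv r z v) * (r v) ^ 2)|
        = |radialCurv r z v * angularCurv r z v| * (r v) ^ 2 := by
      rw [abs_mul, abs_neg, abs_of_nonneg (by positivity : (0:ℝ) ≤ (r v)^2)]
    calc |(-(radialCurv r z v * angularCurv r z v) * (r v) ^ 2)
          - (angularCurv r z v) ^ 2 * (r v) ^ 2|
        ≤ |(-(radialCurv r z v * angularCurv r z v) * (r v) ^ 2)|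
          + |(angularCurv r z v) ^ 2 * (r v) ^ 2| := abs_sub _ _
      _ ≤ |radialCurv r z v * angularCurv r z v| * (r v) ^ 2
          + (angularCurv r z v) ^ 2 * (r v) ^ 2 := by
          rw [h1, abs_of_nonneg (by positivity : (0:ℝ) ≤ (angularCurv r z v)^2 * (r v)^2)]
  -- Key A : |r u * r' u - u| ≤ D for u ≥ 0
  have keyA : ∀ u ≥ (0:ℝ), |r u * deriv r u - u| ≤ D := by
    intro u hu
    have hFTC : ∫ v in (0:ℝ)..u, (deriv r v * deriv r v + r v * deriv (deriv r) v)
        = r u * deriv r u - r 0 * deriv r 0 := by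
      apply intervalIntegral.integral_eq_sub_of_hasDerivAt
      · intro x _
        exact (hdr x).hasDerivAt.mul (hdr' x).hasDerivAt
      · exact ((hcdr.mul hcdr).add (hcr.mul hcd2)).intervalIntegrable _ _
    have hone : ∫ v in (0:ℝ)..u, (1:ℝ) = u := by simp
    have heq : r u * deriv r u - u = ∫ v in (0:ℝ)..u, F v := by
      rw [hF_def]
      beta_reduce
      rw [intervalIntegral.integral_sub
        (f := fun v => deriv r v * deriv r v + r v * deriv (deriv r) v) (g := fun _ => (1:ℝ))
        (((hcdr.mul hcdr).add (hcr.mul hcd2)).intervalIntegrable _ _)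
        (intervalIntegrable_const), hFTC, hone, hr0]
      ring
    rw [heq, intervalIntegral.integral_of_le hu]
    calc |∫ v in Set.Ioc (0:ℝ) u, F v|
        ≤ ∫ v in Set.Ioc (0:ℝ) u, |F v| := by
          simpa [Real.norm_eq_abs] using
            norm_integral_le_integral_norm (μ := volume.restrict (Set.Ioc 0 u)) F
      _ ≤ ∫ v in Set.Ioc (0:ℝ) u, h v := by
          apply setIntegral_mono_on
          · exact (hFc.abs.integrableOn_Icc (a := 0) (b := u)).mono_set Set.Ioc_subset_Icc_self
          · exact hh_int.mono_set (fun x hx => le_of_lt hx.1)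
          · exact measurableSet_Ioc
          · exact fun x hx => hFh x hx.1
      _ ≤ D := by
          apply setIntegral_mono_set hh_int
            (Filter.Eventually.of_forall fun v => hh_nonneg v)
          exact Filter.Eventually.of_forall (fun x hx => le_of_lt hx.1)
  -- Key B : |r s ^ 2 - s ^ 2| ≤ 2 D s  for s ≥ 0
  have keyB : ∀ s ≥ (0:ℝ), |r s ^ 2 - s ^ 2| ≤ 2 * D * s := by
    intro s hs
    have hFTC : ∫ v in (0:ℝ)..s, (2 * (r v * deriv r v) - 2 * v)
        = (r s * r s - s * s) - (r 0 * r 0 - 0 * 0) := by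
      apply intervalIntegral.integral_eq_sub_of_hasDerivAt
      · intro x _
        have h1 : HasDerivAt (fun u => r u * r u - u * u)
            ((deriv r x * r x + r x * deriv r x) - (1 * x + x * 1)) x :=
          ((hdr x).hasDerivAt.mul (hdr x).hasDerivAt).sub
            ((hasDerivAt_id x).mul (hasDerivAt_id x))
        exact h1.congr_deriv (by ring)
      · exact ((continuous_const.mul (hcr.mul hcdr)).sub
          (continuous_const.mul continuous_id)).intervalIntegrable _ _
    have hbound : |∫ v in (0:ℝ)..s, (2 * (r v * deriv r v) - 2 * v)| ≤ 2 * D * |s - 0| := by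
      rw [← Real.norm_eq_abs]
      apply intervalIntegral.norm_integral_le_of_norm_le_const
      intro x hx
      rw [Set.uIoc_of_le hs] at hx
      have := keyA x hx.1.le
      rw [Real.norm_eq_abs]
      calc |2 * (r x * deriv r x) - 2 * x| = 2 * |r x * deriv r x - x| := by
            rw [show 2 * (r x * deriv r x) - 2 * x = 2 * (r x * deriv r x - x) by ring,
              abs_mul, abs_two]
        _ ≤ 2 * D := by linarith
    rw [hFTC, hr0] at hbound
    have h1 : |s - 0| = s := by rw [sub_zero, abs_of_nonneg hs]
    rw [h1] at hbound
    norm_num at hbound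
    calc |r s ^ 2 - s ^ 2| = |r s * r s - s * s| := by rw [pow_two, pow_two]
      _ ≤ 2 * D * s := hbound
  -- conclusion
  refine ⟨D + 1, by linarith, 1, le_refl 1, fun s hs => ?_⟩
  have hs0 : (0:ℝ) ≤ s := by linarith
  have hcube : ∫ v in (0:ℝ)..s, v ^ 2 = s ^ 3 / 3 := by
    rw [integral_pow]; norm_num
  have hr2int : IntervalIntegrable (fun v => (r v) ^ 2) volume 0 s :=
    ((hcr.pow 2).intervalIntegrable _ _)
  have hv2int : IntervalIntegrable (fun v : ℝ => v ^ 2) volume 0 s :=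
    ((continuous_id.pow 2).intervalIntegrable _ _)
  have heq : (∫ v in (0:ℝ)..s, (r v) ^ 2) - s ^ 3 / 3
      = ∫ v in (0:ℝ)..s, ((r v) ^ 2 - v ^ 2) := by
    rw [intervalIntegral.integral_sub hr2int hv2int, hcube]
  rw [heq]
  calc |∫ v in (0:ℝ)..s, ((r v) ^ 2 - v ^ 2)|
      ≤ ∫ v in (0:ℝ)..s, |(r v) ^ 2 - v ^ 2| :=
        intervalIntegral.abs_integral_le_integral_abs hs0
    _ ≤ ∫ v in (0:ℝ)..s, 2 * D * v := by
        apply intervalIntegral.integral_mono_on hs0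
        · exact ((hcr.pow 2).sub (continuous_id.pow 2)).abs.intervalIntegrable _ _
        · exact (continuous_const.mul continuous_id).intervalIntegrable _ _
        · exact fun x hx => keyB x hx.1
    _ = D * s ^ 2 := by
        rw [intervalIntegral.integral_const_mul, integral_id]
        ring
    _ ≤ (D + 1) * s ^ 2 := by nlinarith
end
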